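/- Let G be a graph and let X be a set of edges of G such that the induced subgraph G[X] is connected and contains at least two distinct cycles, and X is minimal with this property (a bicycle). Then G[X] is either a theta subgraph (two distinct vertices joined by three internally disjoint paths), a loose handcuff (two vertex-disjoint cycles joined by a minimal path), or a tight handcuff (two edge-disjoint cycles sharing exactly one vertex). -/

import Mathlib

open Matroid Set

namespace Bicirc

variable {α : Type*}

/-- A circuit of a matroid: a minimal dependent set. -/
def Circ (M : Matroid α) (C : Set α) : Prop :=
  M.Dep C ∧ ∀ D, D ⊂ C → M.Indep D

/-- A cocircuit: a circuit of the dual matroid. -/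
def Cocirc (M : Matroid α) (C : Set α) : Prop := Circ M✶ C

/-- Deletion of a set from a matroid. -/
def Del (M : Matroid α) (X : Set α) : Matroid α := M ↾ (M.E \ X)

/-- `e` is a loop of the matroid `M`. -/
def IsLoopE (M : Matroid α) (e : α) : Prop := Circ M {e}

/-- `e` is a coloop of the matroid `M`. -/
def IsColoopE (M : Matroid α) (e : α) : Prop := Cocirc M {e}

/-- A single element is a separator iff it is a loop or a coloop. -/
def SepElem (M : Matroid α) (e : α) : Prop := IsLoopE M e ∨ IsColoopE M e

/-- The rank of a set in a matroid (as a natural number). -/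
noncomputable def rk (M : Matroid α) (X : Set α) : ℕ :=
  sSup {n | ∃ I, M.Indep I ∧ I ⊆ X ∧ n = I.ncard}

/-- The rank of a matroid. -/
noncomputable def rkM (M : Matroid α) : ℕ := rk M M.E

/-- A matroid is connected if it is nonempty and every two distinct elements
lie in a common circuit. -/
def MConn (M : Matroid α) : Prop :=
  M.E.Nonempty ∧ ∀ e ∈ M.E, ∀ f ∈ M.E, e ≠ f → ∃ C, Circ M C ∧ e ∈ C ∧ f ∈ C

/-- `A` gives a `k`-separation `(A, M.E \ A)` of `M`. -/
def KSep (M : Matroid α) (k : ℕ) (A : Set α) : Prop :=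
  A ⊆ M.E ∧ k ≤ A.ncard ∧ k ≤ (M.E \ A).ncard ∧
    rk M A + rk M (M.E \ A) < rkM M + k

/-- A matroid is 3-connected if it has no `k`-separation for `k < 3`. -/
def ThreeConn (M : Matroid α) : Prop := ∀ k, 0 < k → k < 3 → ∀ A, ¬ KSep M k A

/-- Every pair of distinct elements of `C` lies in a common circuit of `M | C`. -/
def PairConn (M : Matroid α) (C : Set α) : Prop :=
  C ⊆ M.E ∧ ∀ e ∈ C, ∀ f ∈ C, e ≠ f → ∃ K, Circ (M ↾ C) K ∧ e ∈ K ∧ f ∈ K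

/-- `C` is a connected component of the matroid `M`. -/
def IsComp (M : Matroid α) (C : Set α) : Prop :=
  C.Nonempty ∧ PairConn M C ∧ ∀ D, PairConn M D → C ⊆ D → D = C

/-- A non-separating cocircuit: deleting it leaves a connected matroid. -/
def NonSepCocirc (M : Matroid α) (K : Set α) : Prop :=
  Cocirc M K ∧ MConn (Del M K)

/-- A cyclic flat: a flat whose restriction has no coloops. -/
def CyclicFlat (M : Matroid α) (Z : Set α) : Prop :=
  M.IsFlat Z ∧ ∀ e ∈ Z, ¬ IsColoopE (M ↾ Z) e

/-- `e` and `f` are clones: every cyclic flat contains one iff it contains the other. -/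
def Clones (M : Matroid α) (e f : α) : Prop :=
  ∀ Z, CyclicFlat M Z → (e ∈ Z ↔ f ∈ Z)

/-- A clonal class: a maximal set of pairwise clone elements. -/
def ClonalClass (M : Matroid α) (F : Set α) : Prop :=
  F ⊆ M.E ∧ (∀ e ∈ F, ∀ f ∈ F, Clones M e f) ∧
    ∀ F', F' ⊆ M.E → (∀ e ∈ F', ∀ f ∈ F', Clones M e f) → F ⊆ F' → F' = F

/-- Disjoint sets `X`, `Y` are skew: no circuit of `M` inside `X ∪ Y` meets both. -/
def Skew (M : Matroid α) (X Y : Set α) : Prop :=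
  ∀ C, Circ M C → C ⊆ X ∪ Y → (C ∩ X = ∅ ∨ C ∩ Y = ∅)

/-- A good cocircuit. -/
def GoodCocirc (M : Matroid α) (K : Set α) : Prop :=
  Cocirc M K ∧ (∃! D, IsComp (Del M K) D ∧ 1 < D.ncard) ∧
    ∀ x, IsColoopE (Del M K) x → ∀ D, IsComp (Del M K) D → 1 < D.ncard →
      ∃ F C, ClonalClass M F ∧ rk M F = 2 ∧ F ⊆ K ∧ Circ M C ∧ x ∈ C ∧
        C ∩ K ⊆ F ∧ (C ∩ K).ncard = 2 ∧ (C ∩ D).Nonempty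

/-! ### Multigraphs -/

/-- A multigraph on vertex type `V` with edge type `E`: each edge has a pair of ends. -/
structure MGraph (V : Type*) (E : Type*) where
  ends : E → Sym2 V

variable {V E : Type*}

/-- The vertices incident with at least one edge of `X`. -/
def VX (G : MGraph V E) (X : Set E) : Set V := {v | ∃ e ∈ X, v ∈ G.ends e}

/-- The set of edges incident with the vertex `v`. -/
def star (G : MGraph V E) (v : V) : Set E := {e | v ∈ G.ends e}

/-- The degree of `v` in the edge set `X` (loops count twice). -/
noncomputable def deg (G : MGraph V E) (X : Set E) (v : V) : ℕ :=
  ({e ∈ X | v ∈ G.ends e}).ncard + ({e ∈ X | G.ends e = s(v, v)}).ncard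

/-- Two edges of `X` sharing a vertex. -/
def EAdj (G : MGraph V E) (X : Set E) (a b : E) : Prop :=
  a ∈ X ∧ b ∈ X ∧ ∃ v, v ∈ G.ends a ∧ v ∈ G.ends b

/-- The subgraph `G[X]` is connected. -/
def ConnOn (G : MGraph V E) (X : Set E) : Prop :=
  ∀ a ∈ X, ∀ b ∈ X, Relation.ReflTransGen (EAdj G X) a b

/-- `C` is the edge set of a cycle of `G`. -/
def IsCycle (G : MGraph V E) (C : Set E) : Prop :=
  C.Nonempty ∧ ConnOn G C ∧ ∀ v ∈ VX G C, deg G C v = 2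

/-- `X` contains no cycle. -/
def Acyclic (G : MGraph V E) (X : Set E) : Prop := ∀ C, C ⊆ X → ¬ IsCycle G C

/-- `X` contains two distinct cycles. -/
def TwoCycles (G : MGraph V E) (X : Set E) : Prop :=
  ∃ C₁ C₂, C₁ ⊆ X ∧ C₂ ⊆ X ∧ IsCycle G C₁ ∧ IsCycle G C₂ ∧ C₁ ≠ C₂

/-- A bicycle: a minimal edge set inducing a connected subgraph with more than one cycle. -/
def IsBicycle (G : MGraph V E) (X : Set E) : Prop :=
  (ConnOn G X ∧ TwoCycles G X) ∧ ∀ Y, Y ⊂ X → ¬ (ConnOn G Y ∧ TwoCycles G Y)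

/-- `P` is the edge set of a path of `G` with end-vertices `u` and `v`. -/
def IsPathBtw (G : MGraph V E) (P : Set E) (u v : V) : Prop :=
  P.Nonempty ∧ ConnOn G P ∧ Acyclic G P ∧ u ≠ v ∧
    deg G P u = 1 ∧ deg G P v = 1 ∧ ∀ w ∈ VX G P, deg G P w ≤ 2

/-- `X` induces a theta subgraph of `G`. -/
def IsTheta (G : MGraph V E) (X : Set E) : Prop :=
  ∃ u v P₁ P₂ P₃, u ≠ v ∧
    IsPathBtw G P₁ u v ∧ IsPathBtw G P₂ u v ∧ IsPathBtw G P₃ u v ∧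
    P₁ ∩ P₂ = ∅ ∧ P₁ ∩ P₃ = ∅ ∧ P₂ ∩ P₃ = ∅ ∧
    VX G P₁ ∩ VX G P₂ = {u, v} ∧ VX G P₁ ∩ VX G P₃ = {u, v} ∧
    VX G P₂ ∩ VX G P₃ = {u, v} ∧ X = P₁ ∪ P₂ ∪ P₃

/-- `X` induces a loose handcuff of `G`. -/
def IsLooseHandcuff (G : MGraph V E) (X : Set E) : Prop :=
  ∃ C₁ C₂ P u v, IsCycle G C₁ ∧ IsCycle G C₂ ∧ VX G C₁ ∩ VX G C₂ = ∅ ∧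
    IsPathBtw G P u v ∧ VX G P ∩ VX G C₁ = {u} ∧ VX G P ∩ VX G C₂ = {v} ∧
    P ∩ C₁ = ∅ ∧ P ∩ C₂ = ∅ ∧ X = C₁ ∪ C₂ ∪ P

/-- `X` induces a tight handcuff of `G`. -/
def IsTightHandcuff (G : MGraph V E) (X : Set E) : Prop :=
  ∃ C₁ C₂ v, IsCycle G C₁ ∧ IsCycle G C₂ ∧ C₁ ∩ C₂ = ∅ ∧
    VX G C₁ ∩ VX G C₂ = {v} ∧ X = C₁ ∪ C₂

/-- Vertex adjacency via an edge. -/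
def VAdj (G : MGraph V E) (u w : V) : Prop := ∃ e, u ∈ G.ends e ∧ w ∈ G.ends e

/-- The graph `G` is connected. -/
def GConn (G : MGraph V E) : Prop := ∀ u w : V, Relation.ReflTransGen (VAdj G) u w

/-- The graph `G - x` is connected. -/
def ConnAvoid (G : MGraph V E) (x : V) : Prop :=
  ∀ u w : V, u ≠ x → w ≠ x →
    Relation.ReflTransGen
      (fun a b => a ≠ x ∧ b ≠ x ∧ ∃ e, x ∉ G.ends e ∧ a ∈ G.ends e ∧ b ∈ G.ends e) u w

/-- `G` is 2-connected: connected and with no cutvertex. -/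
def TwoConnGraph (G : MGraph V E) : Prop := GConn G ∧ ∀ x, ConnAvoid G x

/-- `C` is (the edge set of) a connected component of `G[X]`. -/
def IsGComp (G : MGraph V E) (X C : Set E) : Prop :=
  C ⊆ X ∧ C.Nonempty ∧ ConnOn G C ∧
    ∀ D, D ⊆ X → D.Nonempty → ConnOn G D → C ⊆ D → D = C

/-- The number of acyclic components of `G[X]`. -/
noncomputable def numAcyclicComps (G : MGraph V E) (X : Set E) : ℕ :=
  {C | IsGComp G X C ∧ Acyclic G C}.ncard

/-- `M` is the bicircular matroid of `G`: its circuits are precisely the bicycles. -/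
def IsBicircOf (G : MGraph V E) (M : Matroid E) : Prop :=
  M.E = Set.univ ∧ ∀ C, Circ M C ↔ IsBicycle G C

/-- The edge set `X` contains a pendent edge. -/
def PendentEdge (G : MGraph V E) (X : Set E) : Prop :=
  ∃ e ∈ X, ∃ w ∈ G.ends e, deg G X w = 1

/-- The graph `G - v` is a cycle. -/
def DelVIsCycle (G : MGraph V E) (v : V) : Prop :=
  IsCycle G {e | v ∉ G.ends e} ∧ ∀ w, w ≠ v → w ∈ VX G {e | v ∉ G.ends e}

/-! ### Matroid-labelled trees -/

/-- A matroid-labelled tree. -/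
structure MTree (α : Type*) where
  ι : Type
  fin : Fintype ι
  lab : ι → Matroid α
  adj : ι → ι → Prop
  symm : ∀ i j, adj i j → adj j i
  loopless : ∀ i, ¬ adj i i
  conn : ∀ i j, Relation.ReflTransGen adj i j
  acyc : ∀ i j, adj i j →
    ¬ Relation.ReflTransGen
        (fun a b => adj a b ∧ ¬(a = i ∧ b = j) ∧ ¬(a = j ∧ b = i)) i j
  card3 : (∃ i j : ι, i ≠ j) → ∀ i, 3 ≤ (lab i).E.ncard
  disj : ∀ i j, i ≠ j → ¬ adj i j → (lab i).E ∩ (lab j).E = ∅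
  meet : ∀ i j, adj i j →
    ∃ e, (lab i).E ∩ (lab j).E = {e} ∧ ¬ SepElem (lab i) e ∧ ¬ SepElem (lab j) e

/-- The basepoint elements of a matroid-labelled tree. -/
def MTree.bpts (T : MTree α) : Set α :=
  {e | ∃ i j, T.adj i j ∧ e ∈ (T.lab i).E ∧ e ∈ (T.lab j).E}

/-- The ground set of the matroid `M(T)`. -/
def MTree.ground (T : MTree α) : Set α := (⋃ i, (T.lab i).E) \ T.bpts

/-- The ground-set elements appearing in nodes of `S`. -/
def MTree.elems (T : MTree α) (S : Set T.ι) : Set α :=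
  (⋃ i ∈ S, (T.lab i).E) ∩ T.ground

/-- `S` induces a connected subgraph of the tree. -/
def MTree.SubConn (T : MTree α) (S : Set T.ι) : Prop :=
  ∀ i ∈ S, ∀ j ∈ S,
    Relation.ReflTransGen (fun a b => a ∈ S ∧ b ∈ S ∧ T.adj a b) i j

/-- The circuits of the matroid `M(T)`: glued along a connected subtree. -/
def MTree.IsTreeCircuit (T : MTree α) (C : Set α) : Prop :=
  ∃ (S : Set T.ι) (f : T.ι → Set α), S.Nonempty ∧ T.SubConn S ∧
    (∀ i ∈ S, Circ (T.lab i) (f i)) ∧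
    (∀ i ∈ S, ∀ j, T.adj i j → ∀ e, e ∈ (T.lab i).E → e ∈ (T.lab j).E →
      (e ∈ f i ↔ j ∈ S)) ∧
    C = (⋃ i ∈ S, f i) \ T.bpts

/-- `M = M(T)`. -/
def MTree.IsDecompOf (T : MTree α) (M : Matroid α) : Prop :=
  M.E = T.ground ∧ ∀ C, Circ M C ↔ T.IsTreeCircuit C

/-- A node whose matroid is a circuit. -/
def MTree.CircNode (T : MTree α) (i : T.ι) : Prop := Circ (T.lab i) (T.lab i).E

/-- A node whose matroid is a cocircuit. -/
def MTree.CocircNode (T : MTree α) (i : T.ι) : Prop := Cocirc (T.lab i) (T.lab i).E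

/-- `T` is the canonical (Cunningham–Edmonds) decomposition tree of `M`. -/
def MTree.IsCanonical (T : MTree α) (M : Matroid α) : Prop :=
  T.IsDecompOf M ∧
    (∀ i, ThreeConn (T.lab i) ∨ T.CircNode i ∨ T.CocircNode i) ∧
    ∀ i j, T.adj i j →
      ¬(T.CircNode i ∧ T.CircNode j) ∧ ¬(T.CocircNode i ∧ T.CocircNode j)

/-- The component of `T` minus the edge `{i, j}` containing `i`. -/
def MTree.side (T : MTree α) (i j : T.ι) : Set T.ι :=
  {k | Relation.ReflTransGen
        (fun a b => T.adj a b ∧ ¬(a = i ∧ b = j) ∧ ¬(a = j ∧ b = i)) i k}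

/-- `(A, B)` is displayed by an edge of `T`. -/
def MTree.DispEdge (T : MTree α) (A B : Set α) : Prop :=
  ∃ i j, T.adj i j ∧ A = T.elems (T.side i j) ∧ B = T.elems (T.side j i)

/-- The component of `T - n` containing `k`. -/
def MTree.compAvoid (T : MTree α) (n k : T.ι) : Set T.ι :=
  {k' | Relation.ReflTransGen (fun a b => T.adj a b ∧ a ≠ n ∧ b ≠ n) k k'}

/-- `(A, B)` is displayed by the node `n` of `T`. -/
def MTree.DispNode (T : MTree α) (n : T.ι) (A B : Set α) : Prop :=
  A ∪ B = T.ground ∧ A ∩ B = ∅ ∧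
    ∀ k, k ≠ n →
      (T.elems (T.compAvoid n k) ⊆ A ∨ T.elems (T.compAvoid n k) ⊆ B)

/-- `(A, B)` is a 2-separation of `M`. -/
def TwoSep (M : Matroid α) (A B : Set α) : Prop :=
  A ∪ B = M.E ∧ A ∩ B = ∅ ∧ 2 ≤ A.ncard ∧ 2 ≤ B.ncard ∧
    rk M A + rk M B ≤ rkM M + 1

/-- `X` is 2-separating in `M`. -/
def SepSet2 (M : Matroid α) (X : Set α) : Prop :=
  rk M X + rk M (M.E \ X) ≤ rkM M + 1

/-- A wedge relative to `A`: a maximal 2-separating nonempty proper subset of `M.E \ A`. -/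
def Wedge (M : Matroid α) (A X : Set α) : Prop :=
  X ⊆ M.E \ A ∧ X.Nonempty ∧ X ≠ M.E \ A ∧ SepSet2 M X ∧
    ∀ Y, Y ⊆ M.E \ A → Y.Nonempty → Y ≠ M.E \ A → SepSet2 M Y → X ⊆ Y → Y = X

/-- The rooted matroid `(N, L)` is bicircular: `N = B(H)` for some finite multigraph `H`
in which every element of `L` is a loop. -/
def RootedBicirc (N : Matroid α) (L : Set α) : Prop :=
  ∃ (V : Type) (_ : Fintype V) (_ : N.E.Finite) (G : MGraph V ↥N.E),
    (∀ D, Circ N D ↔ ∃ C : Set ↥N.E, IsBicycle G C ∧ D = Subtype.val '' C) ∧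
    ∀ l : ↥N.E, l.1 ∈ L → (G.ends l).IsDiag

end Bicirc

namespace Bicirc
section

open Set

variable {V E : Type*} {G : MGraph V E}

lemma mem_VX {X : Set E} {v : V} : v ∈ VX G X ↔ ∃ e ∈ X, v ∈ G.ends e := Iff.rfl

lemma mem_VX_of_mem {X : Set E} {e : E} {v : V} (he : e ∈ X) (hv : v ∈ G.ends e) :
    v ∈ VX G X := ⟨e, he, hv⟩

lemma VX_mono {X Y : Set E} (h : X ⊆ Y) : VX G X ⊆ VX G Y :=
  fun _ ⟨e, he, hv⟩ => ⟨e, h he, hv⟩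

lemma VX_union {X Y : Set E} : VX G (X ∪ Y) = VX G X ∪ VX G Y := by
  ext v
  constructor
  · rintro ⟨e, (he | he), hv⟩
    · exact Or.inl ⟨e, he, hv⟩
    · exact Or.inr ⟨e, he, hv⟩
  · rintro (⟨e, he, hv⟩ | ⟨e, he, hv⟩)
    · exact ⟨e, Or.inl he, hv⟩
    · exact ⟨e, Or.inr he, hv⟩

lemma VX_empty : VX G (∅ : Set E) = ∅ := by
  ext v; simp [mem_VX]

variable [Fintype E]

lemma deg_mono {X Y : Set E} (h : X ⊆ Y) (v : V) : deg G X v ≤ deg G Y v := by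
  unfold deg
  exact Nat.add_le_add
    (Set.ncard_le_ncard (fun e he => ⟨h he.1, he.2⟩) (Set.toFinite _))
    (Set.ncard_le_ncard (fun e he => ⟨h he.1, he.2⟩) (Set.toFinite _))

lemma deg_add {X A : Set E} (h : A ⊆ X) (v : V) :
    deg G X v = deg G A v + deg G (X \ A) v := by
  unfold deg
  have h1 : {e ∈ X | v ∈ G.ends e} = {e ∈ A | v ∈ G.ends e} ∪ {e ∈ X \ A | v ∈ G.ends e} := by
    ext e
    simp only [Set.mem_setOf_eq, Set.mem_union, Set.mem_diff]
    constructor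
    · rintro ⟨he, hv⟩
      by_cases hA : e ∈ A
      · exact Or.inl ⟨hA, hv⟩
      · exact Or.inr ⟨⟨he, hA⟩, hv⟩
    · rintro (⟨he, hv⟩ | ⟨⟨he, _⟩, hv⟩)
      exacts [⟨h he, hv⟩, ⟨he, hv⟩]
  have h2 : {e ∈ X | G.ends e = s(v, v)} =
      {e ∈ A | G.ends e = s(v, v)} ∪ {e ∈ X \ A | G.ends e = s(v, v)} := by
    ext e
    simp only [Set.mem_setOf_eq, Set.mem_union, Set.mem_diff]
    constructor
    · rintro ⟨he, hv⟩
      by_cases hA : e ∈ A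
      · exact Or.inl ⟨hA, hv⟩
      · exact Or.inr ⟨⟨he, hA⟩, hv⟩
    · rintro (⟨he, hv⟩ | ⟨⟨he, _⟩, hv⟩)
      exacts [⟨h he, hv⟩, ⟨he, hv⟩]
  rw [h1, h2,
    Set.ncard_union_eq (Set.disjoint_left.2 (fun e he he' => he'.1.2 he.1))
      (Set.toFinite _) (Set.toFinite _),
    Set.ncard_union_eq (Set.disjoint_left.2 (fun e he he' => he'.1.2 he.1))
      (Set.toFinite _) (Set.toFinite _)]
  ring

lemma one_le_deg_iff {X : Set E} {v : V} : v ∈ VX G X ↔ 1 ≤ deg G X v := by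
  constructor
  · rintro ⟨e, he, hv⟩
    have : 0 < ({e ∈ X | v ∈ G.ends e}).ncard :=
      (Set.ncard_pos (Set.toFinite _)).2 ⟨e, he, hv⟩
    unfold deg; omega
  · intro h
    unfold deg at h
    rcases Nat.lt_or_ge 0 ({e ∈ X | v ∈ G.ends e}).ncard with h1 | h1
    · obtain ⟨e, he, hv⟩ := (Set.ncard_pos (Set.toFinite _)).1 h1
      exact ⟨e, he, hv⟩
    · have h2 : 0 < ({e ∈ X | G.ends e = s(v, v)}).ncard := by omega
      obtain ⟨e, he, hv⟩ := (Set.ncard_pos (Set.toFinite _)).1 h2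
      exact ⟨e, he, by rw [hv]; exact Sym2.mem_mk_left v v⟩

lemma deg_eq_zero {X : Set E} {v : V} (h : v ∉ VX G X) : deg G X v = 0 := by
  by_contra hd
  exact h (one_le_deg_iff.2 (show 1 ≤ deg G X v by omega))

lemma deg_pos_of_mem {X : Set E} {e : E} {v : V} (he : e ∈ X) (hv : v ∈ G.ends e) :
    1 ≤ deg G X v := one_le_deg_iff.1 ⟨e, he, hv⟩

/-- loops give degree ≥ 2 -/
lemma two_le_deg_of_loop {X : Set E} {e : E} {v : V} (he : e ∈ X)
    (hv : G.ends e = s(v, v)) : 2 ≤ deg G X v := by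
  have h1 : 1 ≤ ({e ∈ X | v ∈ G.ends e}).ncard :=
    (Set.ncard_pos (Set.toFinite _)).2 ⟨e, he, by rw [hv]; exact Sym2.mem_mk_left v v⟩
  have h2 : 1 ≤ ({e ∈ X | G.ends e = s(v, v)}).ncard :=
    (Set.ncard_pos (Set.toFinite _)).2 ⟨e, he, hv⟩
  unfold deg; omega

/-- two distinct edges at `v` give degree ≥ 2 -/
lemma two_le_deg_of_two_edges {X : Set E} {e f : E} {v : V} (he : e ∈ X) (hf : f ∈ X)
    (hef : e ≠ f) (hve : v ∈ G.ends e) (hvf : v ∈ G.ends f) : 2 ≤ deg G X v := by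
  have h1 : 2 ≤ ({e ∈ X | v ∈ G.ends e}).ncard := by
    have : ({e, f} : Set E) ⊆ {e ∈ X | v ∈ G.ends e} := by
      rintro x (rfl | rfl)
      exacts [⟨he, hve⟩, ⟨hf, hvf⟩]
    calc 2 = ({e, f} : Set E).ncard := (Set.ncard_pair hef).symm
    _ ≤ _ := Set.ncard_le_ncard this (Set.toFinite _)
  unfold deg; omega

/-- if deg = 1 then there is a unique, non-loop edge at v -/
lemma deg_eq_one_structure {X : Set E} {v : V} (h : deg G X v = 1) :
    ∃ e ∈ X, v ∈ G.ends e ∧ ¬ (G.ends e).IsDiag ∧ ∀ f ∈ X, v ∈ G.ends f → f = e := by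
  obtain ⟨e, he, hv⟩ := one_le_deg_iff.2 (show 1 ≤ deg G X v by omega)
  refine ⟨e, he, hv, ?_, ?_⟩
  · intro hd
    have : G.ends e = s(v, v) := by
      obtain ⟨⟨a, b⟩, hab⟩ := Quot.exists_rep (G.ends e)
      have hab' : G.ends e = s(a, b) := hab.symm
      rw [hab'] at hd hv ⊢
      rw [Sym2.mk_isDiag_iff] at hd
      subst hd
      rcases Sym2.mem_iff.1 hv with rfl | rfl <;> rfl
    exact absurd h (by have := two_le_deg_of_loop he this; omega)
  · intro f hf hvf
    by_contra hfe
    exact absurd h (by have := two_le_deg_of_two_edges hf he hfe hvf hv; omega)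


end

section

open Set

variable {V E : Type*} {G : MGraph V E}

lemma EAdj.symm {X : Set E} {a b : E} (h : EAdj G X a b) : EAdj G X b a :=
  ⟨h.2.1, h.1, h.2.2.imp (fun _ hv => ⟨hv.2, hv.1⟩)⟩

lemma EAdj_symmetric {X : Set E} : Symmetric (EAdj G X) := fun _ _ h => h.symm

lemma EAdj_mono {X Y : Set E} (h : X ⊆ Y) {a b : E} (hab : EAdj G X a b) : EAdj G Y a b :=
  ⟨h hab.1, h hab.2.1, hab.2.2⟩

lemma rtg_symm {X : Set E} {a b : E} (h : Relation.ReflTransGen (EAdj G X) a b) :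
    Relation.ReflTransGen (EAdj G X) b a :=
  @Std.Symm.symm _ _ (@Relation.ReflTransGen.stdSymm _ _ ⟨fun _ _ h => EAdj.symm h⟩) _ _ h

lemma rtg_mono {X Y : Set E} (h : X ⊆ Y) {a b : E}
    (hab : Relation.ReflTransGen (EAdj G X) a b) :
    Relation.ReflTransGen (EAdj G Y) a b :=
  Relation.ReflTransGen.mono (fun _ _ => EAdj_mono h) _ _ hab

lemma ConnOn.mono_rel {X Y : Set E} (hC : ConnOn G X) (h : X ⊆ Y) :
    ∀ a ∈ X, ∀ b ∈ X, Relation.ReflTransGen (EAdj G Y) a b :=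
  fun a ha b hb => rtg_mono h (hC a ha b hb)

lemma connOn_singleton (e : E) : ConnOn G {e} := by
  rintro a rfl b rfl; exact Relation.ReflTransGen.refl

lemma connOn_empty : ConnOn G (∅ : Set E) := by rintro a ha; exact absurd ha (by simp)

/-- union of two connected sets sharing a vertex is connected -/
lemma connOn_union {P Q : Set E} (hP : ConnOn G P) (hQ : ConnOn G Q) {z : V}
    (hzP : z ∈ VX G P) (hzQ : z ∈ VX G Q) : ConnOn G (P ∪ Q) := by
  obtain ⟨p, hp, hzp⟩ := hzP
  obtain ⟨q, hq, hzq⟩ := hzQ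
  have hpq : Relation.ReflTransGen (EAdj G (P ∪ Q)) p q :=
    Relation.ReflTransGen.single ⟨Or.inl hp, Or.inr hq, z, hzp, hzq⟩
  have keyP : ∀ a ∈ P, Relation.ReflTransGen (EAdj G (P ∪ Q)) a p :=
    fun a ha => rtg_mono Set.subset_union_left (hP a ha p hp)
  have keyQ : ∀ a ∈ Q, Relation.ReflTransGen (EAdj G (P ∪ Q)) q a :=
    fun a ha => rtg_mono Set.subset_union_right (hQ q hq a ha)
  rintro a (ha | ha) b (hb | hb)
  · exact rtg_mono Set.subset_union_left (hP a ha b hb)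
  · exact ((keyP a ha).trans hpq).trans (keyQ b hb)
  · exact rtg_symm (((keyP b hb).trans hpq).trans (keyQ a ha))
  · exact rtg_mono Set.subset_union_right (hQ a ha b hb)

/-- Deletion lemma: if the neighbours of `e` can bypass `e`, deleting `e`
preserves connectivity between remaining edges. -/
lemma rtg_del {X : Set E} {e : E}
    (H : ∀ f ∈ X, f ≠ e → EAdj G X f e → ∀ g ∈ X, g ≠ e → EAdj G X e g →
      Relation.ReflTransGen (EAdj G (X \ {e})) f g)
    {a b : E} (hab : Relation.ReflTransGen (EAdj G X) a b) (hb : b ≠ e) (ha : a ≠ e) :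
    Relation.ReflTransGen (EAdj G (X \ {e})) a b := by
  have main : ∀ x, Relation.ReflTransGen (EAdj G X) x b →
      ((x ≠ e → Relation.ReflTransGen (EAdj G (X \ {e})) x b) ∧
       (x = e → ∃ g, g ∈ X ∧ g ≠ e ∧ EAdj G X e g ∧
          Relation.ReflTransGen (EAdj G (X \ {e})) g b)) := by
    intro x hx
    induction hx using Relation.ReflTransGen.head_induction_on with
    | refl =>
      refine ⟨fun _ => Relation.ReflTransGen.refl, fun hbe => absurd hbe hb⟩
    | @head x' y' hxy hyb ih =>
      constructor
      · intro hxe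
        by_cases hye : y' = e
        · obtain ⟨g, hg, hge, heg, hgb⟩ := ih.2 hye
          exact (H x' hxy.1 hxe (hye ▸ hxy) g hg hge heg).trans hgb
        · exact Relation.ReflTransGen.head
            ⟨⟨hxy.1, hxe⟩, ⟨hxy.2.1, hye⟩, hxy.2.2⟩ (ih.1 hye)
      · intro hx'e
        by_cases hye : y' = e
        · exact ih.2 hye
        · exact ⟨y', hxy.2.1, hye, hx'e ▸ hxy, ih.1 hye⟩
  exact (main a hab).1 ha

/-- removing a pendant edge preserves connectivity -/
lemma connOn_del_pendant [Fintype E] {X : Set E} (hX : ConnOn G X) {e : E} (he : e ∈ X)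
    {w : V} (hw : w ∈ G.ends e) (hdeg : deg G X w = 1) : ConnOn G (X \ {e}) := by
  rintro a ⟨ha, hae⟩ b ⟨hb, hbe⟩
  refine rtg_del ?_ (hX a ha b hb) hbe hae
  intro f hf hfe hfE g hg hge hEg
  obtain ⟨vf, hvf, hvfe⟩ := hfE.2.2
  obtain ⟨vg, hvge, hvg⟩ := hEg.2.2
  -- the shared vertices cannot be w
  have hvfw : vf ≠ w := by
    rintro rfl
    obtain ⟨e', _, _, _, huniq⟩ := deg_eq_one_structure hdeg
    have h1 := huniq f hf hvf
    have h2 := huniq e he hw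
    exact hfe (h1.trans h2.symm)
  have hvgw : vg ≠ w := by
    rintro rfl
    obtain ⟨e', _, _, _, huniq⟩ := deg_eq_one_structure hdeg
    have h1 := huniq g hg hvg
    have h2 := huniq e he hw
    exact hge (h1.trans h2.symm)
  -- hence vf = vg = other end of e
  obtain ⟨⟨x, y⟩, hxy⟩ := Quot.exists_rep (G.ends e)
  have hxy' : G.ends e = s(x, y) := hxy.symm
  rw [hxy'] at hvfe hvge hw
  have hfg : vf = vg := by
    rcases Sym2.mem_iff.1 hw with rfl | rfl
    · rcases Sym2.mem_iff.1 hvfe with h | rfl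
      · exact absurd h hvfw
      rcases Sym2.mem_iff.1 hvge with h | rfl
      · exact absurd h hvgw
      rfl
    · rcases Sym2.mem_iff.1 hvfe with rfl | h
      swap
      · exact absurd h hvfw
      rcases Sym2.mem_iff.1 hvge with rfl | h
      · rfl
      · exact absurd h hvgw
  exact Relation.ReflTransGen.single ⟨⟨hf, hfe⟩, ⟨hg, hge⟩, vf, hvf, hfg ▸ hvg⟩


end

section

open Set
open scoped Classical

variable {V E : Type*} {G : MGraph V E}

/-- First-entry lemma: walking from outside `A` into `A`, there is a last edge
outside `A` touching a vertex of `A`, reachable without entering `A`. -/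
lemma first_entry {X A : Set E} (hX : ConnOn G X) {a b : E} (ha : a ∈ X) (haA : a ∉ A)
    (hb : b ∈ X) (hbA : b ∈ A) :
    ∃ f ∈ X \ A, ∃ z, z ∈ G.ends f ∧ z ∈ VX G A ∧
      Relation.ReflTransGen (EAdj G (X \ A)) a f := by
  suffices h : ∀ x, Relation.ReflTransGen (EAdj G X) x b → x ∉ A →
      ∃ f ∈ X \ A, ∃ z, z ∈ G.ends f ∧ z ∈ VX G A ∧
        Relation.ReflTransGen (EAdj G (X \ A)) x f from h a (hX a ha b hb) haA
  intro x hx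
  induction hx using Relation.ReflTransGen.head_induction_on with
  | refl => intro hxA; exact absurd hbA hxA
  | @head x y hxy _ ih =>
    intro hxA
    by_cases hyA : y ∈ A
    · obtain ⟨z, hz1, hz2⟩ := hxy.2.2
      exact ⟨x, ⟨hxy.1, hxA⟩, z, hz1, ⟨y, hyA, hz2⟩, Relation.ReflTransGen.refl⟩
    · obtain ⟨f, hf, z, hz1, hz2, hrtg⟩ := ih hyA
      exact ⟨f, hf, z, hz1, hz2,
        Relation.ReflTransGen.head ⟨⟨hxy.1, hxA⟩, ⟨hxy.2.1, hyA⟩, hxy.2.2⟩ hrtg⟩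

/-- The connected component of `a` in `Y`. -/
def comp (G : MGraph V E) (Y : Set E) (a : E) : Set E :=
  {b ∈ Y | Relation.ReflTransGen (EAdj G Y) a b}

lemma comp_subset {Y : Set E} {a : E} : comp G Y a ⊆ Y := fun _ hb => hb.1

lemma mem_comp_self {Y : Set E} {a : E} (ha : a ∈ Y) : a ∈ comp G Y a :=
  ⟨ha, Relation.ReflTransGen.refl⟩

lemma comp_closed {Y : Set E} {a b c : E} (hb : b ∈ comp G Y a) (hbc : EAdj G Y b c) :
    c ∈ comp G Y a := ⟨hbc.2.1, hb.2.tail hbc⟩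

lemma rtg_in_comp {Y : Set E} {a b : E} (hab : Relation.ReflTransGen (EAdj G Y) a b) :
    Relation.ReflTransGen (EAdj G (comp G Y a)) a b := by
  induction hab with
  | refl => exact Relation.ReflTransGen.refl
  | @tail b' c' hab' hbc ih =>
    have hb' : b' ∈ comp G Y a := ⟨hbc.1, hab'⟩
    have hc' : c' ∈ comp G Y a := comp_closed hb' hbc
    exact ih.tail ⟨hb', hc', hbc.2.2⟩

lemma comp_connOn {Y : Set E} {a : E} : ConnOn G (comp G Y a) := by
  intro b hb c hc
  exact (rtg_symm (rtg_in_comp hb.2)).trans (rtg_in_comp hc.2)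

lemma deg_comp [Fintype E] {Y : Set E} {a : E} {z : V} (hz : z ∈ VX G (comp G Y a)) :
    deg G (comp G Y a) z = deg G Y z := by
  obtain ⟨g, hg, hzg⟩ := hz
  have key : ∀ f ∈ Y, z ∈ G.ends f → f ∈ comp G Y a :=
    fun f hf hzf => comp_closed hg ⟨hg.1, hf, z, hzg, hzf⟩
  unfold deg
  congr 1
  · congr 1; ext f
    exact ⟨fun h => ⟨h.1.1, h.2⟩, fun h => ⟨key f h.1 h.2, h.2⟩⟩
  · congr 1; ext f
    constructor
    · exact fun h => ⟨h.1.1, h.2⟩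
    · exact fun h => ⟨key f h.1 (by rw [h.2]; exact Sym2.mem_mk_left z z), h.2⟩

lemma comp_merge {Y : Set E} {x y : E} {z : V} (hx : x ∈ Y) (hy : y ∈ Y)
    (hzx : z ∈ VX G (comp G Y x)) (hzy : z ∈ VX G (comp G Y y)) :
    Relation.ReflTransGen (EAdj G Y) x y := by
  obtain ⟨f, hf, hzf⟩ := hzx
  obtain ⟨g, hg, hzg⟩ := hzy
  have hfg : EAdj G Y f g := ⟨hf.1, hg.1, z, hzf, hzg⟩
  exact ((hf.2.tail hfg).trans (rtg_symm hg.2))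

section Handshake
variable [Fintype V] [Fintype E]

lemma ncard_filter_eq (X : Set E) (p : E → Prop) :
    {e ∈ X | p e}.ncard = ((Set.toFinite X).toFinset.filter p).card := by
  rw [← Set.ncard_coe_finset]
  congr 1
  ext e
  simp only [Finset.coe_filter, Set.Finite.mem_toFinset, Set.mem_setOf_eq]

lemma ends_card {X : Set E} {e : E} (he : e ∈ X) :
    ((Set.toFinite (VX G X)).toFinset.filter (fun v => v ∈ G.ends e)).card
      + ((Set.toFinite (VX G X)).toFinset.filter (fun v => G.ends e = s(v, v))).card = 2 := by
  obtain ⟨⟨x, y⟩, hxy⟩ := Quot.exists_rep (G.ends e)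
  have hxy' : G.ends e = s(x, y) := hxy.symm
  have hxV : x ∈ VX G X := ⟨e, he, by rw [hxy']; exact Sym2.mem_mk_left x y⟩
  have hyV : y ∈ VX G X := ⟨e, he, by rw [hxy']; exact Sym2.mem_mk_right x y⟩
  by_cases hd : x = y
  · subst hd
    have h1 : (Set.toFinite (VX G X)).toFinset.filter (fun v => v ∈ G.ends e) = {x} := by
      ext v
      simp only [Finset.mem_filter, Set.Finite.mem_toFinset, Finset.mem_singleton, hxy',
        Sym2.mem_iff, or_self]
      exact ⟨fun h => h.2, fun h => ⟨h ▸ hxV, h⟩⟩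
    have h2 : (Set.toFinite (VX G X)).toFinset.filter (fun v => G.ends e = s(v, v)) = {x} := by
      ext v
      simp only [Finset.mem_filter, Set.Finite.mem_toFinset, Finset.mem_singleton, hxy',
        Sym2.eq_iff, or_self, and_self]
      constructor
      · rintro ⟨-, h⟩; exact h.symm
      · rintro rfl; exact ⟨hxV, rfl⟩
    rw [h1, h2]; simp
  · have h1 : (Set.toFinite (VX G X)).toFinset.filter (fun v => v ∈ G.ends e) = {x, y} := by
      ext v
      simp only [Finset.mem_filter, Set.Finite.mem_toFinset, Finset.mem_insert,
        Finset.mem_singleton, hxy', Sym2.mem_iff]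
      refine ⟨fun h => h.2, fun h => ⟨?_, h⟩⟩
      rcases h with rfl | rfl
      exacts [hxV, hyV]
    have h2 : (Set.toFinite (VX G X)).toFinset.filter (fun v => G.ends e = s(v, v)) = ∅ := by
      ext v
      simp only [Finset.mem_filter, Finset.notMem_empty, iff_false, hxy', Sym2.eq_iff]
      rintro ⟨_, (⟨rfl, rfl⟩ | ⟨rfl, rfl⟩)⟩ <;> exact hd rfl
    rw [h1, h2, Finset.card_pair hd]; simp

lemma handshake (X : Set E) :
    ∑ v ∈ (Set.toFinite (VX G X)).toFinset, deg G X v = 2 * X.ncard := by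
  have hdeg : ∀ v : V, deg G X v =
      ((Set.toFinite X).toFinset.filter (fun e => v ∈ G.ends e)).card
      + ((Set.toFinite X).toFinset.filter (fun e => G.ends e = s(v, v))).card := by
    intro v
    unfold deg
    rw [ncard_filter_eq, ncard_filter_eq]
    congr!

  calc ∑ v ∈ (Set.toFinite (VX G X)).toFinset, deg G X v
      = ∑ v ∈ (Set.toFinite (VX G X)).toFinset,
          (((Set.toFinite X).toFinset.filter (fun e => v ∈ G.ends e)).card
          + ((Set.toFinite X).toFinset.filter (fun e => G.ends e = s(v, v))).card) :=
        Finset.sum_congr rfl (fun v _ => hdeg v)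
    _ = ∑ e ∈ (Set.toFinite X).toFinset,
          (((Set.toFinite (VX G X)).toFinset.filter (fun v => v ∈ G.ends e)).card
          + ((Set.toFinite (VX G X)).toFinset.filter (fun v => G.ends e = s(v, v))).card) := by
        simp only [Finset.card_filter]
        rw [Finset.sum_add_distrib, Finset.sum_add_distrib, Finset.sum_comm,
          @Finset.sum_comm _ _ _ _ _ _ (fun v e => if G.ends e = s(v, v) then 1 else 0)]
    _ = ∑ _e ∈ (Set.toFinite X).toFinset, 2 :=
        Finset.sum_congr rfl (fun e he => ends_card ((Set.Finite.mem_toFinset _).1 he))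
    _ = 2 * X.ncard := by
        rw [Finset.sum_const, smul_eq_mul, mul_comm, Set.ncard_eq_toFinset_card X]

lemma even_card_odd_deg (X : Set E) :
    Even ({v ∈ VX G X | Odd (deg G X v)}).ncard := by
  have h := handshake (G := G) X
  have heven : Even (∑ v ∈ (Set.toFinite (VX G X)).toFinset, deg G X v) := by
    rw [h]; exact even_two_mul _
  rw [Finset.even_sum_iff_even_card_odd] at heven
  have : {v ∈ VX G X | Odd (deg G X v)} =
      ↑((Set.toFinite (VX G X)).toFinset.filter fun v => Odd (deg G X v)) := by
    ext v
    simp only [Finset.coe_filter, Set.Finite.mem_toFinset, Set.mem_setOf_eq]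
  rw [this, Set.ncard_coe_finset]
  exact heven

/-- In a set whose odd-degree vertices are among `{u, t}`, if there is one odd vertex
then `u` and `t` are both odd-degree vertices. -/
lemma odd_vertex_pair {Z : Set E} {u t : V} (hut : u ≠ t)
    (hsub : ∀ z ∈ VX G Z, Odd (deg G Z z) → z = u ∨ z = t)
    {z₀ : V} (hz₀ : z₀ ∈ VX G Z) (hodd : Odd (deg G Z z₀)) :
    (u ∈ VX G Z ∧ Odd (deg G Z u)) ∧ (t ∈ VX G Z ∧ Odd (deg G Z t)) := by
  set O := {v ∈ VX G Z | Odd (deg G Z v)} with hO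
  have hOsub : O ⊆ {u, t} := fun z hz => hsub z hz.1 hz.2
  have hOne : z₀ ∈ O := ⟨hz₀, hodd⟩
  have heven := even_card_odd_deg (G := G) Z
  rw [← hO] at heven
  have h1 : 1 ≤ O.ncard := (Set.ncard_pos (Set.toFinite _)).2 ⟨z₀, hOne⟩
  have h2 : O.ncard ≤ 2 := by
    calc O.ncard ≤ ({u, t} : Set V).ncard := Set.ncard_le_ncard hOsub (Set.toFinite _)
    _ = 2 := Set.ncard_pair hut
  have hcard : O.ncard = 2 := by
    rcases heven with ⟨k, hk⟩; omega
  have : O = {u, t} := Set.eq_of_subset_of_ncard_le hOsub (by rw [hcard, Set.ncard_pair hut])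
    (Set.toFinite _)
  constructor
  · have : u ∈ O := this ▸ Set.mem_insert u {t}
    exact ⟨this.1, this.2⟩
  · have : t ∈ O := this ▸ Set.mem_insert_of_mem u rfl
    exact ⟨this.1, this.2⟩

end Handshake

end

section

open Set
open scoped Classical

variable {V E : Type*} {G : MGraph V E}

lemma ends_cases (G : MGraph V E) (e : E) : ∃ x y, G.ends e = s(x, y) := by
  obtain ⟨⟨x, y⟩, h⟩ := Quot.exists_rep (G.ends e)
  exact ⟨x, y, h.symm⟩

lemma VX_pair {e : E} {x y : V} (h : G.ends e = s(x, y)) :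
    VX G {e} = {x, y} := by
  ext v
  simp only [mem_VX, Set.mem_singleton_iff, exists_eq_left, h, Sym2.mem_iff,
    Set.mem_insert_iff]

variable [Fintype V] [Fintype E]

lemma deg_singleton_end {e : E} {x y : V} (h : G.ends e = s(x, y)) (hxy : x ≠ y) :
    deg G {e} x = 1 := by
  have h1 : {f ∈ ({e} : Set E) | x ∈ G.ends f} = {e} := by
    ext f
    simp only [Set.mem_setOf_eq, Set.mem_singleton_iff]
    exact ⟨fun hf => hf.1, fun hf => ⟨hf, by rw [hf, h]; exact Sym2.mem_mk_left x y⟩⟩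
  have h2 : {f ∈ ({e} : Set E) | G.ends f = s(x, x)} = ∅ := by
    ext f
    simp only [Set.mem_setOf_eq, Set.mem_singleton_iff, Set.mem_empty_iff_false, iff_false,
      not_and]
    rintro rfl hf
    rw [h, Sym2.eq_iff] at hf
    rcases hf with ⟨-, h'⟩ | ⟨-, h'⟩ <;> exact hxy h'.symm
  unfold deg
  rw [h1, h2]
  simp

/-- If `C ⊊ X` with `X` connected and `C` a cycle, some vertex of `C` has degree ≥ 3. -/
lemma exists_deg3 {X C : Set E} (hX : ConnOn G X) (hC : IsCycle G C) (hCX : C ⊆ X)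
    (hne : C ≠ X) : ∃ z ∈ VX G C, 3 ≤ deg G X z := by
  have hss : (X \ C).Nonempty :=
    Set.diff_nonempty.2 (fun hXC => hne (subset_antisymm hCX hXC))
  obtain ⟨a, haX, haC⟩ := hss
  obtain ⟨b, hbC⟩ := hC.1
  obtain ⟨f, hf, z, hzf, hzC, -⟩ := first_entry hX haX haC (hCX hbC) hbC
  refine ⟨z, hzC, ?_⟩
  have h1 : deg G X z = deg G C z + deg G (X \ C) z := deg_add hCX z
  have h2 : deg G C z = 2 := hC.2.2 z hzC
  have h3 : 1 ≤ deg G (X \ C) z := deg_pos_of_mem hf hzf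
  omega

/-- A cycle containing a loop is just that loop. -/
lemma cycle_loop {C : Set E} {e : E} {z : V} (hC : IsCycle G C) (he : e ∈ C)
    (hz : G.ends e = s(z, z)) : C = {e} := by
  have hzC : z ∈ VX G C := ⟨e, he, by rw [hz]; exact Sym2.mem_mk_left z z⟩
  have hdeg : deg G C z = 2 := hC.2.2 z hzC
  have huniq : ∀ f ∈ C, z ∈ G.ends f → f = e := by
    intro f hf hzf
    by_contra hfe
    have h3 : 2 ≤ ({f ∈ C | z ∈ G.ends f}).ncard := by
      calc 2 = ({f, e} : Set E).ncard := (Set.ncard_pair hfe).symm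
      _ ≤ _ := by
        refine Set.ncard_le_ncard ?_ (Set.toFinite _)
        rintro x (rfl | rfl)
        · exact ⟨hf, hzf⟩
        · exact ⟨he, by rw [hz]; exact Sym2.mem_mk_left z z⟩
    have h4 : 1 ≤ ({f ∈ C | G.ends f = s(z, z)}).ncard :=
      (Set.ncard_pos (Set.toFinite _)).2 ⟨e, he, hz⟩
    unfold deg at hdeg
    omega
  ext g
  simp only [Set.mem_singleton_iff]
  constructor
  · intro hg
    have key : ∀ x, Relation.ReflTransGen (EAdj G C) x e → x ∈ C → x = e := by
      intro x hx
      induction hx using Relation.ReflTransGen.head_induction_on with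
      | refl => exact fun _ => rfl
      | @head x' y' hxy _ ih =>
        intro _
        have hy' : y' = e := ih hxy.2.1
        subst hy'
        obtain ⟨v, hv1, hv2⟩ := hxy.2.2
        rw [hz, Sym2.mem_iff, or_self] at hv2
        subst hv2
        exact huniq x' hxy.1 hv1
    exact key g (hC.2.1 g hg e he) hg
  · rintro rfl; exact he

lemma cycle_vx_card {C : Set E} (hC : IsCycle G C) : (VX G C).ncard = C.ncard := by
  have h := handshake (G := G) C
  have h2 : ∑ v ∈ (Set.toFinite (VX G C)).toFinset, deg G C v
      = 2 * (VX G C).ncard := by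
    rw [Finset.sum_congr rfl (fun v hv => hC.2.2 v ((Set.Finite.mem_toFinset _).1 hv)),
      Finset.sum_const, smul_eq_mul, mul_comm, Set.ncard_eq_toFinset_card (VX G C)]
  omega

/-- first step out of `a` -/
lemma rtg_first_step {X : Set E} {a b : E} (h : Relation.ReflTransGen (EAdj G X) a b) :
    a ≠ b → ∃ g ∈ X, g ≠ a ∧ EAdj G X a g := by
  induction h using Relation.ReflTransGen.head_induction_on with
  | refl => exact fun hab => absurd rfl hab
  | @head x y hxy hyb ih =>
    intro hab
    by_cases hyx : y = x
    · subst hyx; exact ih hab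
    · exact ⟨y, hxy.2.1, hyx, hxy⟩

/-- Tree bound: a connected nonempty edge set spans at most `|X| + 1` vertices. -/
lemma conn_vx_card : ∀ n (X : Set E), X.ncard = n → ConnOn G X → X.Nonempty →
    (VX G X).ncard ≤ X.ncard + 1 := by
  intro n
  induction n using Nat.strong_induction_on with
  | _ n ih =>
  intro X hn hX hne
  by_cases h1 : ∃ v ∈ VX G X, deg G X v = 1
  · obtain ⟨v, hv, hdeg⟩ := h1
    obtain ⟨e, he, hve, hnd, huniq⟩ := deg_eq_one_structure hdeg
    obtain ⟨u, hu⟩ := Sym2.mem_iff_exists.1 hve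
    have huv : u ≠ v := fun h => hnd (by rw [hu, Sym2.mk_isDiag_iff]; exact h.symm)
    rcases Set.eq_empty_or_nonempty (X \ {e}) with hemp | hne'
    · have hXe : X = {e} := by
        apply subset_antisymm _ (by simpa using he)
        intro f hf
        by_contra hfe
        exact (hemp ▸ Set.notMem_empty f) ⟨hf, hfe⟩
      rw [hXe, VX_pair hu]
      have : ({v, u} : Set V).ncard ≤ 2 := by
        apply le_trans (Set.ncard_insert_le v {u})
        simp
      simpa using this
    · have hconn' : ConnOn G (X \ {e}) := connOn_del_pendant hX he hve hdeg
      have hvX' : v ∉ VX G (X \ {e}) := by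
        rintro ⟨f, ⟨hf, hfe⟩, hvf⟩
        exact hfe (huniq f hf hvf)
      have huX' : u ∈ VX G (X \ {e}) := by
        obtain ⟨g₀, hg₀⟩ := hne'
        have hge : g₀ ≠ e := fun h => hg₀.2 (h ▸ rfl)
        obtain ⟨g, hgX, hgne, hadj⟩ := rtg_first_step (hX e he g₀ hg₀.1) (Ne.symm hge)
        obtain ⟨z, hz1, hz2⟩ := hadj.2.2
        rw [hu, Sym2.mem_iff] at hz1
        rcases hz1 with rfl | rfl
        · exact absurd (huniq g hgX hz2) hgne
        · exact ⟨g, ⟨hgX, hgne⟩, hz2⟩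
      have hsub : VX G X ⊆ VX G (X \ {e}) ∪ {v} := by
        rintro w ⟨f, hf, hwf⟩
        by_cases hfe : f = e
        · subst hfe
          rw [hu, Sym2.mem_iff] at hwf
          rcases hwf with rfl | rfl
          · exact Or.inr rfl
          · exact Or.inl huX'
        · exact Or.inl ⟨f, ⟨hf, hfe⟩, hwf⟩
      have hcard' : (X \ {e}).ncard = X.ncard - 1 := Set.ncard_diff_singleton_of_mem he
      have hxpos : 1 ≤ X.ncard := (Set.ncard_pos (Set.toFinite _)).2 hne
      have hIH : (VX G (X \ {e})).ncard ≤ (X \ {e}).ncard + 1 := by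
        refine ih (X \ {e}).ncard (by omega) _ rfl hconn' hne'
      calc (VX G X).ncard ≤ (VX G (X \ {e}) ∪ {v}).ncard :=
            Set.ncard_le_ncard hsub (Set.toFinite _)
        _ ≤ (VX G (X \ {e})).ncard + ({v} : Set V).ncard := Set.ncard_union_le _ _
        _ = (VX G (X \ {e})).ncard + 1 := by rw [Set.ncard_singleton]
        _ ≤ X.ncard + 1 := by omega
  · push_neg at h1
    have h2 : ∀ v ∈ VX G X, 2 ≤ deg G X v := by
      intro v hv
      have ha := one_le_deg_iff.1 hv
      have hb := h1 v hv
      omega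
    have hsum := handshake (G := G) X
    have hlow : (Set.toFinite (VX G X)).toFinset.card • 2
        ≤ ∑ v ∈ (Set.toFinite (VX G X)).toFinset, deg G X v :=
      Finset.card_nsmul_le_sum _ _ _ (fun v hv => h2 v ((Set.Finite.mem_toFinset _).1 hv))
    rw [smul_eq_mul, hsum, ← Set.ncard_eq_toFinset_card (VX G X)] at hlow
    omega

/-- A path spans exactly `|P| + 1` vertices, and internal vertices have degree 2. -/
lemma path_struct {P : Set E} {u t : V} (hP : IsPathBtw G P u t) :
    (VX G P).ncard = P.ncard + 1 ∧
      ∀ z ∈ VX G P, z ≠ u → z ≠ t → deg G P z = 2 := by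
  obtain ⟨hne, hconn, hacyc, hut, hdu, hdt, hle⟩ := hP
  have huV : u ∈ VX G P := one_le_deg_iff.2 (by omega)
  have htV : t ∈ VX G P := one_le_deg_iff.2 (by omega)
  set Vf := (Set.toFinite (VX G P)).toFinset with hVf
  have huf : u ∈ Vf := (Set.Finite.mem_toFinset _).2 huV
  have htf : t ∈ Vf.erase u := Finset.mem_erase.2 ⟨Ne.symm hut, (Set.Finite.mem_toFinset _).2 htV⟩
  have hsum := handshake (G := G) P
  rw [← hVf] at hsum
  have hsplit : deg G P u + (deg G P t + ∑ z ∈ (Vf.erase u).erase t, deg G P z)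
      = ∑ v ∈ Vf, deg G P v := by
    rw [Finset.add_sum_erase _ _ htf, Finset.add_sum_erase _ _ huf]
  have hcard2 : ((Vf.erase u).erase t).card = Vf.card - 2 := by
    rw [Finset.card_erase_of_mem htf, Finset.card_erase_of_mem huf]
    omega
  have hVcard : Vf.card = (VX G P).ncard := (Set.ncard_eq_toFinset_card (VX G P)).symm
  have hub : ∑ z ∈ (Vf.erase u).erase t, deg G P z ≤ ((Vf.erase u).erase t).card • 2 :=
    Finset.sum_le_card_nsmul _ _ _ (fun z hz => hle z
      ((Set.Finite.mem_toFinset _).1 (Finset.mem_of_mem_erase (Finset.mem_of_mem_erase hz))))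
  have hL1 := conn_vx_card P.ncard P rfl hconn hne
  have hVge2 : 2 ≤ Vf.card := by
    have : ({u, t} : Set V).ncard ≤ (VX G P).ncard := by
      refine Set.ncard_le_ncard ?_ (Set.toFinite _)
      rintro w (rfl | rfl)
      exacts [huV, htV]
    rw [Set.ncard_pair hut] at this
    omega
  rw [smul_eq_mul] at hub
  have hkey : (VX G P).ncard = P.ncard + 1 := by omega
  refine ⟨hkey, ?_⟩
  intro z hzV hzu hzt
  have hzf : z ∈ (Vf.erase u).erase t :=
    Finset.mem_erase.2 ⟨hzt, Finset.mem_erase.2 ⟨hzu, (Set.Finite.mem_toFinset _).2 hzV⟩⟩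
  have hsplit2 : deg G P z + ∑ w ∈ ((Vf.erase u).erase t).erase z, deg G P w
      = ∑ z ∈ (Vf.erase u).erase t, deg G P z := Finset.add_sum_erase _ _ hzf
  have hub2 : ∑ w ∈ ((Vf.erase u).erase t).erase z, deg G P w
      ≤ (((Vf.erase u).erase t).erase z).card • 2 :=
    Finset.sum_le_card_nsmul _ _ _ (fun w hw => hle w
      ((Set.Finite.mem_toFinset _).1
        (Finset.mem_of_mem_erase (Finset.mem_of_mem_erase (Finset.mem_of_mem_erase hw)))))
  have hcard3 : (((Vf.erase u).erase t).erase z).card = Vf.card - 3 := by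
    rw [Finset.card_erase_of_mem hzf, hcard2]
    omega
  have hVge3 : 3 ≤ Vf.card := by
    have : ({z, u, t} : Set V).ncard ≤ (VX G P).ncard := by
      refine Set.ncard_le_ncard ?_ (Set.toFinite _)
      rintro w (rfl | rfl | rfl)
      exacts [hzV, huV, htV]
    have h3 : ({z, u, t} : Set V).ncard = 3 := by
      rw [Set.ncard_insert_of_notMem (by simp [hzu, hzt]), Set.ncard_pair hut]
    omega
  have hdegz : deg G P z ≤ 2 := hle z hzV
  rw [smul_eq_mul] at hub2
  omega

lemma path_of_degrees {D : Set E} {u v : V} (hne : D.Nonempty) (hconn : ConnOn G D)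
    (hdeg : ∀ w ∈ VX G D, deg G D w ≤ 2) (hu : deg G D u = 1) (hv : deg G D v = 1)
    (huv : u ≠ v) : IsPathBtw G D u v := by
  refine ⟨hne, hconn, ?_, huv, hu, hv, hdeg⟩
  intro C hCD hC
  by_cases hCeq : C = D
  · subst hCeq
    exact absurd (hC.2.2 u (one_le_deg_iff.2 (by omega))) (by omega)
  · obtain ⟨z, hzC, hz3⟩ := exists_deg3 hconn hC hCD hCeq
    exact absurd (hdeg z (VX_mono hCD hzC)) (by omega)

/-- Removing a non-loop edge from a cycle yields a path between its endpoints. -/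
lemma cycle_del_edge {C : Set E} {e : E} {x y : V} (hC : IsCycle G C) (he : e ∈ C)
    (hxy : G.ends e = s(x, y)) (hne : x ≠ y) : IsPathBtw G (C \ {e}) x y := by
  have hxC : x ∈ VX G C := ⟨e, he, by rw [hxy]; exact Sym2.mem_mk_left x y⟩
  have hyC : y ∈ VX G C := ⟨e, he, by rw [hxy]; exact Sym2.mem_mk_right x y⟩
  have hsub : ({e} : Set E) ⊆ C := by simpa using he
  have hdegW : ∀ z, deg G C z = deg G {e} z + deg G (C \ {e}) z := fun z => deg_add hsub z
  have hdx : deg G (C \ {e}) x = 1 := by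
    have h1 := hdegW x
    have h2 : deg G {e} x = 1 := deg_singleton_end hxy hne
    have h3 : deg G C x = 2 := hC.2.2 x hxC
    omega
  have hdy : deg G (C \ {e}) y = 1 := by
    have h1 := hdegW y
    have h2 : deg G {e} y = 1 :=
      deg_singleton_end (x := y) (y := x) (by rw [hxy, Sym2.eq_swap]) hne.symm
    have h3 : deg G C y = 2 := hC.2.2 y hyC
    omega
  have hle : ∀ w ∈ VX G (C \ {e}), deg G (C \ {e}) w ≤ 2 := by
    intro w hw
    have h1 := hC.2.2 w (VX_mono Set.diff_subset hw)
    have h2 := hdegW w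
    omega
  have hxW : x ∈ VX G (C \ {e}) := one_le_deg_iff.2 (by omega)
  obtain ⟨f₀, hf₀, -⟩ := hxW
  have hconnW : ConnOn G (C \ {e}) := by
    have key : ∀ c, c ∈ C \ {e} → x ∈ VX G (comp G (C \ {e}) c) := by
      intro c hc
      have hKsub : comp G (C \ {e}) c ⊆ C \ {e} := comp_subset
      have hnotcycle : ¬ IsCycle G (comp G (C \ {e}) c) := by
        intro hcyc
        have hKC : comp G (C \ {e}) c ⊆ C := hKsub.trans Set.diff_subset
        have hKne' : comp G (C \ {e}) c ≠ C := fun h => (hKsub (h.symm ▸ he)).2 rfl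
        obtain ⟨z, hz, h3⟩ := exists_deg3 hC.2.1 hcyc hKC hKne'
        exact absurd (hC.2.2 z (VX_mono hKC hz)) (by omega)
      have hzodd : ∃ z ∈ VX G (comp G (C \ {e}) c), Odd (deg G (comp G (C \ {e}) c) z) := by
        by_contra hall
        push_neg at hall
        apply hnotcycle
        refine ⟨⟨c, mem_comp_self hc⟩, comp_connOn, ?_⟩
        intro z hz
        have h1 : deg G (comp G (C \ {e}) c) z = deg G (C \ {e}) z := deg_comp hz
        have h2 : deg G (C \ {e}) z ≤ 2 := hle z (VX_mono hKsub hz)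
        have h4 : 1 ≤ deg G (comp G (C \ {e}) c) z := one_le_deg_iff.1 hz
        have h5 := hall z hz
        rcases Nat.even_or_odd (deg G (comp G (C \ {e}) c) z) with hev | hod
        · obtain ⟨k, hk⟩ := hev; omega
        · exact absurd hod h5
      obtain ⟨z₀, hz₀, hodd₀⟩ := hzodd
      have hsubodd : ∀ z ∈ VX G (comp G (C \ {e}) c),
          Odd (deg G (comp G (C \ {e}) c) z) → z = x ∨ z = y := by
        intro z hz ho
        rw [deg_comp hz] at ho
        have h1 := hdegW z
        have h2 : deg G C z = 2 :=
          hC.2.2 z (VX_mono (hKsub.trans Set.diff_subset) hz)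
        have h6 : deg G (C \ {e}) z ≤ 2 := hle z (VX_mono hKsub hz)
        obtain ⟨k, hk⟩ := ho
        have h3 : deg G {e} z = 1 := by omega
        have h4 : z ∈ VX G {e} := one_le_deg_iff.2 (by omega)
        rw [VX_pair hxy] at h4
        exact h4
      exact (odd_vertex_pair hne hsubodd hz₀ hodd₀).1.1
    intro a ha b hb
    exact comp_merge ha hb (key a ha) (key b hb)
  exact path_of_degrees ⟨f₀, hf₀⟩ hconnW hle hdx hdy hne

/-- Removing an edge of a cycle preserves connectivity of a superset. -/
lemma connOn_del_cycle_edge {X C : Set E} (hX : ConnOn G X) (hC : IsCycle G C)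
    (hCX : C ⊆ X) {e : E} (he : e ∈ C) : ConnOn G (X \ {e}) := by
  rintro a ⟨ha, hae⟩ b ⟨hb, hbe⟩
  simp only [Set.mem_singleton_iff] at hae hbe
  refine rtg_del ?_ (hX a ha b hb) hbe hae
  intro f hf hfe hfE g hg hge hEg
  obtain ⟨x, y, hxy⟩ := ends_cases G e
  obtain ⟨vf, hvf, hvfe⟩ := hfE.2.2
  obtain ⟨vg, hvge, hvg⟩ := hEg.2.2
  by_cases hd : x = y
  · subst hd
    rw [hxy, Sym2.mem_iff, or_self] at hvfe hvge
    exact Relation.ReflTransGen.single ⟨⟨hf, hfe⟩, ⟨hg, hge⟩, x, hvfe ▸ hvf, hvge ▸ hvg⟩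
  · have hpath := cycle_del_edge hC he hxy hd
    have hWsub : C \ {e} ⊆ X \ {e} := fun w hw => ⟨hCX hw.1, hw.2⟩
    have hxW : x ∈ VX G (C \ {e}) := one_le_deg_iff.2 (by rw [hpath.2.2.2.2.1])
    have hyW : y ∈ VX G (C \ {e}) := one_le_deg_iff.2 (by rw [hpath.2.2.2.2.2.1])
    rw [hxy, Sym2.mem_iff] at hvfe hvge
    have hgetf : ∃ wf ∈ C \ {e}, vf ∈ G.ends wf := by
      rcases hvfe with rfl | rfl
      exacts [hxW, hyW]
    have hgetg : ∃ wg ∈ C \ {e}, vg ∈ G.ends wg := by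
      rcases hvge with rfl | rfl
      exacts [hxW, hyW]
    obtain ⟨wf, hwf, hvwf⟩ := hgetf
    obtain ⟨wg, hwg, hvwg⟩ := hgetg
    have step1 : EAdj G (X \ {e}) f wf := ⟨⟨hf, hfe⟩, hWsub hwf, vf, hvf, hvwf⟩
    have step3 : EAdj G (X \ {e}) wg g := ⟨hWsub hwg, ⟨hg, hge⟩, vg, hvwg, hvg⟩
    have step2 : Relation.ReflTransGen (EAdj G (X \ {e})) wf wg :=
      Relation.ReflTransGen.mono (fun _ _ h => EAdj_mono hWsub h) _ _ (hpath.2.1 wf hwf wg hwg)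
    exact (Relation.ReflTransGen.single step1).trans
      (step2.trans (Relation.ReflTransGen.single step3))

/-- Any finite edge set with at least as many edges as vertices contains a cycle. -/
lemma exists_cycle : ∀ n (Y : Set E), Y.ncard = n → Y.Nonempty →
    (VX G Y).ncard ≤ Y.ncard → ∃ C, C ⊆ Y ∧ IsCycle G C := by
  intro n
  induction n using Nat.strong_induction_on with
  | _ n ih =>
  intro Y hn hne hcard
  by_cases h1 : ∃ v ∈ VX G Y, deg G Y v = 1
  · obtain ⟨v, hv, hdeg⟩ := h1
    obtain ⟨e, he, hve, hnd, huniq⟩ := deg_eq_one_structure hdeg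
    obtain ⟨u, hu⟩ := Sym2.mem_iff_exists.1 hve
    have huv : u ≠ v := fun h => hnd (by rw [hu, Sym2.mk_isDiag_iff]; exact h.symm)
    have hvV : v ∉ VX G (Y \ {e}) := by
      rintro ⟨f, ⟨hf, hfe⟩, hvf⟩
      exact hfe (huniq f hf hvf)
    have hsub : VX G (Y \ {e}) ⊆ VX G Y \ {v} := fun w hw =>
      ⟨VX_mono Set.diff_subset hw, fun h => hvV (h ▸ hw)⟩
    have hYne : (Y \ {e}).Nonempty := by
      rcases Set.eq_empty_or_nonempty (Y \ {e}) with hemp | h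
      · exfalso
        have hYe : Y = {e} := subset_antisymm (fun f hf => by
            by_contra hfe
            exact (hemp ▸ Set.notMem_empty f) ⟨hf, hfe⟩) (by simpa using he)
        have hc1 : Y.ncard = 1 := by rw [hYe]; exact Set.ncard_singleton e
        have hc2 : (VX G Y).ncard = 2 := by
          rw [hYe, VX_pair hu, Set.ncard_pair (Ne.symm huv)]
        omega
      · exact h
    have hYcard : (Y \ {e}).ncard = Y.ncard - 1 := Set.ncard_diff_singleton_of_mem he
    have hvcard : (VX G (Y \ {e})).ncard ≤ Y.ncard - 1 := by
      have h2 : (VX G Y \ {v}).ncard = (VX G Y).ncard - 1 :=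
        Set.ncard_diff_singleton_of_mem hv
      have h3 := Set.ncard_le_ncard hsub (Set.toFinite _)
      have h4 : 1 ≤ (VX G Y).ncard := (Set.ncard_pos (Set.toFinite _)).2 ⟨v, hv⟩
      omega
    have hpos : 1 ≤ Y.ncard := (Set.ncard_pos (Set.toFinite _)).2 hne
    obtain ⟨C, hCsub, hC⟩ := ih (Y \ {e}).ncard (by omega) _ rfl hYne (by omega)
    exact ⟨C, hCsub.trans Set.diff_subset, hC⟩
  · push_neg at h1
    have h2 : ∀ v ∈ VX G Y, 2 ≤ deg G Y v := fun v hv => by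
      have ha := one_le_deg_iff.1 hv
      have hb := h1 v hv
      omega
    by_cases h3 : ∃ v ∈ VX G Y, 3 ≤ deg G Y v
    · obtain ⟨v, hv, hd3⟩ := h3
      have hsum := handshake (G := G) Y
      have hvf : v ∈ (Set.toFinite (VX G Y)).toFinset := (Set.Finite.mem_toFinset _).2 hv
      have hsplit : deg G Y v + ∑ w ∈ ((Set.toFinite (VX G Y)).toFinset).erase v, deg G Y w
          = ∑ w ∈ (Set.toFinite (VX G Y)).toFinset, deg G Y w := Finset.add_sum_erase _ _ hvf
      have hlow : (((Set.toFinite (VX G Y)).toFinset).erase v).card • 2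
          ≤ ∑ w ∈ ((Set.toFinite (VX G Y)).toFinset).erase v, deg G Y w :=
        Finset.card_nsmul_le_sum _ _ _ (fun w hw =>
          h2 w ((Set.Finite.mem_toFinset _).1 (Finset.mem_of_mem_erase hw)))
      rw [smul_eq_mul, Finset.card_erase_of_mem hvf] at hlow
      have hVc : ((Set.toFinite (VX G Y)).toFinset).card = (VX G Y).ncard :=
        (Set.ncard_eq_toFinset_card _).symm
      have hVpos : 1 ≤ (VX G Y).ncard := (Set.ncard_pos (Set.toFinite _)).2 ⟨v, hv⟩
      have hstrict : (VX G Y).ncard + 1 ≤ Y.ncard := by omega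
      obtain ⟨e, he, hve⟩ := hv
      have hYne : (Y \ {e}).Nonempty := by
        rcases Set.eq_empty_or_nonempty (Y \ {e}) with hemp | h
        · exfalso
          have hYe : Y = {e} := subset_antisymm (fun f hf => by
              by_contra hfe
              exact (hemp ▸ Set.notMem_empty f) ⟨hf, hfe⟩) (by simpa using he)
          have hc1 : Y.ncard = 1 := by rw [hYe]; exact Set.ncard_singleton e
          omega
        · exact h
      have hYcard : (Y \ {e}).ncard = Y.ncard - 1 := Set.ncard_diff_singleton_of_mem he
      obtain ⟨C, hCsub, hC⟩ := ih (Y \ {e}).ncard (by omega) _ rfl hYne (by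
        have hmono := Set.ncard_le_ncard (VX_mono (G := G) (Set.diff_subset : Y \ {e} ⊆ Y))
          (Set.toFinite _)
        omega)
      exact ⟨C, hCsub.trans Set.diff_subset, hC⟩
    · push_neg at h3
      obtain ⟨a, ha⟩ := hne
      refine ⟨comp G Y a, comp_subset, ⟨a, mem_comp_self ha⟩, comp_connOn, ?_⟩
      intro z hz
      have h4 := deg_comp (G := G) hz
      have h5 : z ∈ VX G Y := VX_mono comp_subset hz
      have h6 := h2 z h5
      have h7 := h3 z h5
      omega

/-- An edge set with strictly more edges than vertices contains two distinct cycles. -/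
lemma exists_two_cycles {Y : Set E} (hcard : (VX G Y).ncard + 1 ≤ Y.ncard) :
    TwoCycles G Y := by
  have hne : Y.Nonempty := Set.nonempty_of_ncard_ne_zero (by omega)
  obtain ⟨C₁, hC₁sub, hC₁⟩ := exists_cycle (G := G) Y.ncard Y rfl hne (by omega)
  obtain ⟨e, he⟩ := hC₁.1
  have heY : e ∈ Y := hC₁sub he
  have hYne : (Y \ {e}).Nonempty := by
    rcases Set.eq_empty_or_nonempty (Y \ {e}) with hemp | h
    · exfalso
      have hYe : Y = {e} := subset_antisymm (fun f hf => by
          by_contra hfe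
          exact (hemp ▸ Set.notMem_empty f) ⟨hf, hfe⟩) (by simpa using heY)
      obtain ⟨x, y, hxy⟩ := ends_cases G e
      have hx : x ∈ VX G Y := ⟨e, heY, by rw [hxy]; exact Sym2.mem_mk_left x y⟩
      have h1 : 1 ≤ (VX G Y).ncard := (Set.ncard_pos (Set.toFinite _)).2 ⟨x, hx⟩
      have h2 : Y.ncard = 1 := by rw [hYe]; exact Set.ncard_singleton e
      omega
    · exact h
  obtain ⟨C₂, hC₂sub, hC₂⟩ := exists_cycle (G := G) (Y \ {e}).ncard _ rfl hYne (by
    have h1 := Set.ncard_le_ncard (VX_mono (G := G) (Set.diff_subset : Y \ {e} ⊆ Y)) (Set.toFinite _)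
    rw [Set.ncard_diff_singleton_of_mem heY]
    omega)
  refine ⟨C₁, C₂, hC₁sub, hC₂sub.trans Set.diff_subset, hC₁, hC₂, ?_⟩
  intro h
  exact (hC₂sub (h ▸ he)).2 rfl


end

section

open Set
open scoped Classical

variable {V E : Type*} {G : MGraph V E} [Fintype V] [Fintype E]

lemma deg_union_disjoint {A B : Set E} (h : A ∩ B = ∅) (v : V) :
    deg G (A ∪ B) v = deg G A v + deg G B v := by
  have hdiff : (A ∪ B) \ A = B := by
    ext x
    simp only [Set.mem_diff, Set.mem_union]
    constructor
    · rintro ⟨hx | hx, hxA⟩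
      · exact absurd hx hxA
      · exact hx
    · intro hx
      refine ⟨Or.inr hx, fun hxA => ?_⟩
      exact (h ▸ Set.notMem_empty x) ⟨hxA, hx⟩
  rw [deg_add (Set.subset_union_left : A ⊆ A ∪ B), hdiff]

lemma path_endpoints {P : Set E} {u t : V} (hP : IsPathBtw G P u t) :
    u ∈ VX G P ∧ t ∈ VX G P :=
  ⟨one_le_deg_iff.2 (by rw [hP.2.2.2.2.1]), one_le_deg_iff.2 (by rw [hP.2.2.2.2.2.1])⟩

lemma singleton_path {e : E} {x y : V} (h : G.ends e = s(x, y)) (hxy : x ≠ y) :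
    IsPathBtw G {e} x y := by
  refine path_of_degrees ⟨e, rfl⟩ (connOn_singleton e) ?_ (deg_singleton_end h hxy)
    (deg_singleton_end (by rw [h, Sym2.eq_swap]) hxy.symm) hxy
  intro w hw
  rw [VX_pair h] at hw
  rcases hw with rfl | rfl
  · rw [deg_singleton_end h hxy]; omega
  · rw [deg_singleton_end (by rw [h, Sym2.eq_swap]) hxy.symm]; omega

/-- Splitting a path at an internal vertex. -/
lemma path_split : ∀ n (W : Set E) (u t v : V), W.ncard = n → IsPathBtw G W u t →
    v ∈ VX G W → v ≠ u → v ≠ t →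
    ∃ A B, A ∪ B = W ∧ A ∩ B = ∅ ∧ IsPathBtw G A u v ∧ IsPathBtw G B v t ∧
      VX G A ∩ VX G B = {v} := by
  intro n
  induction n using Nat.strong_induction_on with
  | _ n ih =>
  intro W u t v hn hW hv hvu hvt
  obtain ⟨hne, hconn, hacyc, hut, hdu, hdt, hle⟩ := hW
  have hWpath : IsPathBtw G W u t := ⟨hne, hconn, hacyc, hut, hdu, hdt, hle⟩
  have hinner := (path_struct hWpath).2
  obtain ⟨e₁, he₁, hue₁, hnd₁, huniq₁⟩ := deg_eq_one_structure hdu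
  obtain ⟨u', hu'⟩ := Sym2.mem_iff_exists.1 hue₁
  have huu' : u ≠ u' := fun h => hnd₁ (by rw [hu', Sym2.mk_isDiag_iff]; exact h)
  have hsub1 : ({e₁} : Set E) ⊆ W := by simpa using he₁
  have hdegsplit : ∀ z, deg G W z = deg G {e₁} z + deg G (W \ {e₁}) z :=
    fun z => deg_add hsub1 z
  have huW' : u ∉ VX G (W \ {e₁}) := by
    rintro ⟨f, ⟨hf, hfe⟩, huf⟩
    exact hfe (huniq₁ f hf huf)
  have hu'V : u' ∈ VX G W := ⟨e₁, he₁, by rw [hu']; exact Sym2.mem_mk_right u u'⟩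
  have hdeg_e₁_u : deg G {e₁} u = 1 := deg_singleton_end hu' huu'
  have hdeg_e₁_u' : deg G {e₁} u' = 1 :=
    deg_singleton_end (by rw [hu', Sym2.eq_swap]) huu'.symm
  have hdeg_e₁_other : ∀ z, z ≠ u → z ≠ u' → deg G {e₁} z = 0 := by
    intro z hzu hzu'
    apply deg_eq_zero
    rw [VX_pair hu']
    rintro (rfl | rfl)
    exacts [hzu rfl, hzu' rfl]
  -- W is not the single edge e₁
  have hWne₁ : W ≠ {e₁} := by
    rintro rfl
    rw [VX_pair hu'] at hv
    rcases hv with rfl | rfl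
    · exact hvu rfl
    · -- v = u' ; but t ∈ VX {e₁} = {u, u'} and t ≠ u so t = u'
      have htV : t ∈ VX G {e₁} := (path_endpoints hWpath).2
      rw [VX_pair hu'] at htV
      rcases htV with rfl | rfl
      · exact hut rfl
      · exact hvt rfl
  have hW'ne : (W \ {e₁}).Nonempty := by
    rcases Set.eq_empty_or_nonempty (W \ {e₁}) with hemp | h
    · exact absurd (subset_antisymm (fun f hf => by
        by_contra hfe
        exact (hemp ▸ Set.notMem_empty f) ⟨hf, hfe⟩) hsub1) hWne₁
    · exact h
  have htW' : deg G (W \ {e₁}) t = 1 ∨ (t = u') := by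
    by_cases h : t = u'
    · exact Or.inr h
    · left
      have h1 := hdegsplit t
      have h2 := hdeg_e₁_other t (Ne.symm hut) h
      omega
  -- show u' ≠ t
  have hu't : u' ≠ t := by
    intro h
    have htdeg0 : deg G (W \ {e₁}) u' = 0 := by
      have h1 := hdegsplit u'
      have h2 : deg G W u' = 1 := by rw [h]; exact hdt
      omega
    have hdegW' : ∀ z ∈ VX G (W \ {e₁}), deg G (W \ {e₁}) z = 2 := by
      intro z hz
      have hzu : z ≠ u := fun hh => huW' (hh ▸ hz)
      have hzu' : z ≠ u' := by
        rintro rfl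
        have h4 := one_le_deg_iff.1 hz
        omega
      have hzt : z ≠ t := fun hh => hzu' (hh.trans h.symm)
      have h1 := hdegsplit z
      have h2 := hdeg_e₁_other z hzu hzu'
      have h3 := hinner z (VX_mono Set.diff_subset hz) hzu hzt
      omega
    obtain ⟨f₀, hf₀⟩ := hW'ne
    refine hacyc (comp G (W \ {e₁}) f₀) (comp_subset.trans Set.diff_subset) ?_
    refine ⟨⟨f₀, mem_comp_self hf₀⟩, comp_connOn, ?_⟩
    intro z hz
    rw [deg_comp hz]
    exact hdegW' z (VX_mono comp_subset hz)
  -- W' = W \ {e₁} is a path from u' to t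
  have hdW'u' : deg G (W \ {e₁}) u' = 1 := by
    have h1 := hdegsplit u'
    have h3 := hinner u' hu'V (Ne.symm huu') hu't
    omega
  have hdW't : deg G (W \ {e₁}) t = 1 := by
    rcases htW' with h | h
    · exact h
    · exact absurd h.symm hu't
  have hconn' : ConnOn G (W \ {e₁}) := connOn_del_pendant hconn he₁ hue₁ hdu
  have hle' : ∀ w ∈ VX G (W \ {e₁}), deg G (W \ {e₁}) w ≤ 2 := by
    intro w hw
    have h1 := hle w (VX_mono Set.diff_subset hw)
    have h2 := hdegsplit w
    omega
  have hW'path : IsPathBtw G (W \ {e₁}) u' t :=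
    path_of_degrees hW'ne hconn' hle' hdW'u' hdW't hu't
  have hcard' : (W \ {e₁}).ncard = W.ncard - 1 := Set.ncard_diff_singleton_of_mem he₁
  have hWpos : 1 ≤ W.ncard := (Set.ncard_pos (Set.toFinite _)).2 hne
  by_cases hvu' : v = u'
  · -- A = {e₁}, B = W'
    subst hvu'
    refine ⟨{e₁}, W \ {e₁}, Set.union_diff_cancel hsub1, ?_, singleton_path hu' huu',
      hW'path, ?_⟩
    · apply Set.eq_empty_iff_forall_notMem.2
      rintro f ⟨rfl, -, h2⟩
      exact h2 rfl
    · ext z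
      simp only [Set.mem_inter_iff, Set.mem_singleton_iff]
      constructor
      · rintro ⟨h1, h2⟩
        rw [VX_pair hu'] at h1
        rcases h1 with rfl | rfl
        · exact absurd h2 huW'
        · rfl
      · rintro rfl
        exact ⟨by rw [VX_pair hu']; exact Or.inr rfl,
          one_le_deg_iff.2 (by rw [hdW'u'])⟩
  · -- v is internal in W'; use the induction hypothesis
    have hvW' : v ∈ VX G (W \ {e₁}) := by
      have h1 := hdegsplit v
      have h2 := hdeg_e₁_other v hvu hvu'
      have h3 := hinner v hv hvu hvt
      exact one_le_deg_iff.2 (by omega)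
    obtain ⟨A', B', hu'B, hiAB, hA', hB', hvxAB⟩ :=
      ih (W \ {e₁}).ncard (by omega) (W \ {e₁}) u' t v rfl hW'path hvW' hvu' hvt
    have he₁A' : e₁ ∉ A' := fun h => ((hu'B ▸ Set.mem_union_left B' h : e₁ ∈ W \ {e₁})).2 rfl
    have he₁B' : e₁ ∉ B' := fun h => ((hu'B ▸ Set.mem_union_right A' h : e₁ ∈ W \ {e₁})).2 rfl
    have hdisjA : A' ∩ {e₁} = ∅ := by
      ext f
      simp only [Set.mem_inter_iff, Set.mem_singleton_iff, Set.mem_empty_iff_false, iff_false,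
        not_and]
      rintro hf rfl
      exact he₁A' hf
    have hu'A' : u' ∈ VX G A' := (path_endpoints hA').1
    have hdegA : ∀ z, deg G (A' ∪ {e₁}) z = deg G A' z + deg G {e₁} z :=
      fun z => deg_union_disjoint hdisjA z
    have huA' : deg G A' u = 0 := by
      apply deg_eq_zero
      intro h
      exact huW' (VX_mono (hu'B ▸ Set.subset_union_left) h)
    have hA : IsPathBtw G (A' ∪ {e₁}) u v := by
      refine path_of_degrees ⟨e₁, Or.inr rfl⟩
        (connOn_union hA'.2.1 (connOn_singleton e₁) hu'A'
          (by rw [VX_pair hu']; exact Or.inr rfl)) ?_ ?_ ?_ (Ne.symm hvu)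
      · intro w hw
        rw [hdegA w]
        by_cases hwu : w = u
        · subst hwu
          rw [huA', hdeg_e₁_u]
          omega
        by_cases hwu' : w = u'
        · subst hwu'
          rw [hA'.2.2.2.2.1, hdeg_e₁_u']
        · rw [hdeg_e₁_other w hwu hwu']
          rw [VX_union] at hw
          rcases hw with hw | hw
          · have := hA'.2.2.2.2.2.2 w hw
            omega
          · rw [VX_pair hu'] at hw
            rcases hw with rfl | rfl
            exacts [absurd rfl hwu, absurd rfl hwu']
      · rw [hdegA u, huA', hdeg_e₁_u]
      · rw [hdegA v, hA'.2.2.2.2.2.1, hdeg_e₁_other v hvu hvu']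
    refine ⟨A' ∪ {e₁}, B', ?_, ?_, hA, hB', ?_⟩
    · rw [Set.union_comm A' {e₁}, Set.union_assoc, hu'B]
      exact Set.union_diff_cancel hsub1
    · ext f
      simp only [Set.mem_inter_iff, Set.mem_union, Set.mem_singleton_iff,
        Set.mem_empty_iff_false, iff_false, not_and]
      rintro (hf | rfl) hfB
      · exact (hiAB ▸ Set.notMem_empty f) ⟨hf, hfB⟩
      · exact he₁B' hfB
    · rw [VX_union, VX_pair hu']
      ext z
      simp only [Set.mem_inter_iff, Set.mem_union, Set.mem_insert_iff,
        Set.mem_singleton_iff]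
      constructor
      · rintro ⟨hA1 | (rfl | rfl), hB1⟩
        · have : z ∈ VX G A' ∩ VX G B' := ⟨hA1, hB1⟩
          rw [hvxAB] at this
          exact this
        · exact absurd (VX_mono (hu'B ▸ Set.subset_union_right) hB1) huW'
        · exact absurd ((hvxAB ▸ (⟨hu'A', hB1⟩ : z ∈ VX G A' ∩ VX G B')
            : z ∈ ({v} : Set V))) (Ne.symm hvu')
      · rintro rfl
        exact ⟨Or.inl (path_endpoints hA').2, (path_endpoints hB').1⟩

/-- Splitting a cycle at two of its vertices into two internally disjoint paths. -/
lemma cycle_split {C : Set E} {u v : V} (hC : IsCycle G C) (hu : u ∈ VX G C)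
    (hv : v ∈ VX G C) (huv : u ≠ v) :
    ∃ P₁ P₂, P₁ ∪ P₂ = C ∧ P₁ ∩ P₂ = ∅ ∧ IsPathBtw G P₁ u v ∧ IsPathBtw G P₂ u v ∧
      VX G P₁ ∩ VX G P₂ = {u, v} := by
  obtain ⟨e, he, hue⟩ := hu
  obtain ⟨t, ht⟩ := Sym2.mem_iff_exists.1 hue
  have hut : u ≠ t := by
    rintro rfl
    have hloop := cycle_loop hC he ht
    rw [hloop, VX_pair ht] at hv
    rcases hv with rfl | rfl <;> exact huv rfl
  have hW := cycle_del_edge hC he ht hut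
  have hsub : ({e} : Set E) ⊆ C := by simpa using he
  have hdegsplit : ∀ z, deg G C z = deg G {e} z + deg G (C \ {e}) z :=
    fun z => deg_add hsub z
  have hdisj : (C \ {e}) ∩ {e} = ∅ := by
    ext f
    simp only [Set.mem_inter_iff, Set.mem_diff, Set.mem_singleton_iff,
      Set.mem_empty_iff_false, iff_false, not_and]
    rintro ⟨-, h⟩ rfl
    exact h rfl
  by_cases hvt : v = t
  · subst hvt
    refine ⟨{e}, C \ {e}, Set.union_diff_cancel hsub, ?_, singleton_path ht hut, hW, ?_⟩
    · apply Set.eq_empty_iff_forall_notMem.2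
      rintro f ⟨rfl, -, h2⟩
      exact h2 rfl
    · rw [VX_pair ht]
      ext z
      simp only [Set.mem_inter_iff, Set.mem_insert_iff, Set.mem_singleton_iff]
      constructor
      · rintro ⟨h1, -⟩
        exact h1
      · rintro (rfl | rfl)
        · exact ⟨Or.inl rfl, (path_endpoints hW).1⟩
        · exact ⟨Or.inr rfl, (path_endpoints hW).2⟩
  · have hvW : v ∈ VX G (C \ {e}) := by
      have h1 := hdegsplit v
      have h2 : deg G {e} v = 0 := by
        apply deg_eq_zero
        rw [VX_pair ht]
        rintro (rfl | rfl)
        exacts [huv rfl, hvt rfl]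
      have h3 := hC.2.2 v hv
      exact one_le_deg_iff.2 (by omega)
    obtain ⟨A, B, hABu, hABi, hA, hB, hvxAB⟩ :=
      path_split (G := G) (C \ {e}).ncard (C \ {e}) u t v rfl hW hvW (Ne.symm huv) hvt
    have heA : e ∉ A := fun h => ((hABu ▸ Set.mem_union_left B h : e ∈ C \ {e})).2 rfl
    have heB : e ∉ B := fun h => ((hABu ▸ Set.mem_union_right A h : e ∈ C \ {e})).2 rfl
    have hdisjB : B ∩ {e} = ∅ := by
      ext f
      simp only [Set.mem_inter_iff, Set.mem_singleton_iff, Set.mem_empty_iff_false,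
        iff_false, not_and]
      rintro hf rfl
      exact heB hf
    have hdegB : ∀ z, deg G (B ∪ {e}) z = deg G B z + deg G {e} z :=
      fun z => deg_union_disjoint hdisjB z
    have htB : t ∈ VX G B := (path_endpoints hB).2
    have huB : deg G B u = 0 := by
      apply deg_eq_zero
      intro h
      have : u ∈ VX G A ∩ VX G B := ⟨(path_endpoints hA).1, h⟩
      rw [hvxAB] at this
      exact huv this
    have hdeg_e_u : deg G {e} u = 1 := deg_singleton_end ht hut
    have hdeg_e_t : deg G {e} t = 1 :=
      deg_singleton_end (by rw [ht, Sym2.eq_swap]) hut.symm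
    have hdeg_e_other : ∀ z, z ≠ u → z ≠ t → deg G {e} z = 0 := by
      intro z hzu hzt
      apply deg_eq_zero
      rw [VX_pair ht]
      rintro (rfl | rfl)
      exacts [hzu rfl, hzt rfl]
    have hP₂ : IsPathBtw G (B ∪ {e}) u v := by
      refine path_of_degrees ⟨e, Or.inr rfl⟩
        (connOn_union hB.2.1 (connOn_singleton e) htB
          (by rw [VX_pair ht]; exact Or.inr rfl)) ?_ ?_ ?_ huv
      · intro w hw
        rw [hdegB w]
        by_cases hwu : w = u
        · subst hwu
          rw [huB, hdeg_e_u]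
          omega
        by_cases hwt : w = t
        · subst hwt
          rw [hB.2.2.2.2.2.1, hdeg_e_t]
        · rw [hdeg_e_other w hwu hwt]
          rw [VX_union] at hw
          rcases hw with hw | hw
          · have := hB.2.2.2.2.2.2 w hw
            omega
          · rw [VX_pair ht] at hw
            rcases hw with rfl | rfl
            exacts [absurd rfl hwu, absurd rfl hwt]
      · rw [hdegB u, huB, hdeg_e_u]
      · rw [hdegB v, hB.2.2.2.2.1, hdeg_e_other v (fun h => huv h.symm) hvt]
    refine ⟨A, B ∪ {e}, ?_, ?_, hA, hP₂, ?_⟩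
    · rw [← Set.union_assoc, hABu]
      rw [Set.union_comm]
      exact Set.union_diff_cancel hsub
    · ext f
      simp only [Set.mem_inter_iff, Set.mem_union, Set.mem_singleton_iff,
        Set.mem_empty_iff_false, iff_false, not_and]
      rintro hf (hfB | rfl)
      · exact (hABi ▸ Set.notMem_empty f) ⟨hf, hfB⟩
      · exact heA hf
    · rw [VX_union, VX_pair ht]
      ext z
      simp only [Set.mem_inter_iff, Set.mem_union, Set.mem_insert_iff,
        Set.mem_singleton_iff]
      constructor
      · rintro ⟨hA1, hB1 | (rfl | rfl)⟩
        · have : z ∈ VX G A ∩ VX G B := ⟨hA1, hB1⟩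
          rw [hvxAB] at this
          exact Or.inr this
        · exact Or.inl rfl
        · have hmem : z ∈ ({v} : Set V) := hvxAB ▸ (⟨hA1, htB⟩ : z ∈ VX G A ∩ VX G B)
          exact absurd (Set.mem_singleton_iff.1 hmem).symm hvt
      · rintro (rfl | rfl)
        · exact ⟨(path_endpoints hA).1, Or.inr (Or.inl rfl)⟩
        · exact ⟨(path_endpoints hA).2, Or.inl (path_endpoints hB).1⟩


end

section

open Set
open scoped Classical

variable {V E : Type*} {G : MGraph V E} [Fintype V] [Fintype E]

lemma bicycle_min_deg {X : Set E} (hX : IsBicycle G X) :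
    ∀ v ∈ VX G X, 2 ≤ deg G X v := by
  intro v hv
  by_contra h
  have hdeg : deg G X v = 1 := by
    have := one_le_deg_iff.1 hv
    omega
  obtain ⟨e, he, hve, hnd, huniq⟩ := deg_eq_one_structure hdeg
  have hCav : ∀ C, C ⊆ X → IsCycle G C → e ∉ C := by
    intro C hCX hC heC
    have hvC : v ∈ VX G C := ⟨e, heC, hve⟩
    have h2 := hC.2.2 v hvC
    have h3 := deg_mono (G := G) hCX v
    omega
  obtain ⟨C₁, C₂, h1, h2, h3, h4, h5⟩ := hX.1.2
  have hss : X \ {e} ⊂ X := by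
    refine Set.ssubset_iff_subset_ne.2 ⟨Set.diff_subset, fun hh => ?_⟩
    have hx : e ∈ X := he
    rw [← hh] at hx
    exact hx.2 rfl
  refine hX.2 (X \ {e}) hss ⟨connOn_del_pendant hX.1.1 he hve hdeg, C₁, C₂, ?_, ?_, h3, h4, h5⟩
  · exact fun f hf => ⟨h1 hf, fun hh => (hCav C₁ h1 h3) (hh ▸ hf)⟩
  · exact fun f hf => ⟨h2 hf, fun hh => (hCav C₂ h2 h4) (hh ▸ hf)⟩

lemma bicycle_deg3 {X : Set E} (hX : IsBicycle G X) :
    ∃ z ∈ VX G X, 3 ≤ deg G X z := by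
  obtain ⟨C₁, C₂, h1, h2, h3, h4, h5⟩ := hX.1.2
  have hC₂sub : ¬ C₂ ⊆ C₁ := by
    intro hsub
    rcases eq_or_ne C₂ C₁ with h | h
    · exact h5 h.symm
    · obtain ⟨z, hz, h3'⟩ := exists_deg3 h3.2.1 h4 hsub h
      have hz2 := h3.2.2 z (VX_mono hsub hz)
      omega
  obtain ⟨a, haC₂, haC₁⟩ := Set.not_subset.1 hC₂sub
  obtain ⟨b, hb⟩ := h3.1
  obtain ⟨f, hf, z, hzf, hzC₁, -⟩ := first_entry hX.1.1 (h2 haC₂) haC₁ (h1 hb) hb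
  refine ⟨z, VX_mono h1 hzC₁, ?_⟩
  have ha := deg_add (G := G) h1 z
  have hb2 := h3.2.2 z hzC₁
  have hc := deg_pos_of_mem hf hzf
  omega

lemma bicycle_card {X : Set E} (hX : IsBicycle G X) :
    X.ncard = (VX G X).ncard + 1 := by
  have hmin := bicycle_min_deg hX
  obtain ⟨z, hzV, hz3⟩ := bicycle_deg3 hX
  have hsum := handshake (G := G) X
  have hzf : z ∈ (Set.toFinite (VX G X)).toFinset := (Set.Finite.mem_toFinset _).2 hzV
  have hsplit := (Finset.add_sum_erase _ (fun w => deg G X w) hzf).symm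
  have hlz : ((Set.toFinite (VX G X)).toFinset.erase z).card • 2
      ≤ ∑ w ∈ (Set.toFinite (VX G X)).toFinset.erase z, deg G X w :=
    Finset.card_nsmul_le_sum _ _ _ (fun w hw =>
      hmin w ((Set.Finite.mem_toFinset _).1 (Finset.mem_of_mem_erase hw)))
  rw [smul_eq_mul, Finset.card_erase_of_mem hzf] at hlz
  have hVc : ((Set.toFinite (VX G X)).toFinset).card = (VX G X).ncard :=
    (Set.ncard_eq_toFinset_card _).symm
  have hVpos : 1 ≤ (VX G X).ncard := (Set.ncard_pos (Set.toFinite _)).2 ⟨z, hzV⟩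
  have hlower : (VX G X).ncard + 1 ≤ X.ncard := by omega
  by_contra hne
  have hge : (VX G X).ncard + 2 ≤ X.ncard := by omega
  obtain ⟨C₁, C₂, h1, h2, h3, h4, h5⟩ := hX.1.2
  obtain ⟨e, he⟩ := h3.1
  have heX : e ∈ X := h1 he
  have hconn' : ConnOn G (X \ {e}) := connOn_del_cycle_edge hX.1.1 h3 h1 he
  have htc : TwoCycles G (X \ {e}) := by
    apply exists_two_cycles
    have hv' := Set.ncard_le_ncard (VX_mono (G := G) (Set.diff_subset : X \ {e} ⊆ X))
      (Set.toFinite _)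
    rw [Set.ncard_diff_singleton_of_mem heX]
    omega
  have hss : X \ {e} ⊂ X := by
    refine Set.ssubset_iff_subset_ne.2 ⟨Set.diff_subset, fun hh => ?_⟩
    have hx : e ∈ X := heX
    rw [← hh] at hx
    exact hx.2 rfl
  exact hX.2 (X \ {e}) hss ⟨hconn', htc⟩

lemma bicycle_dichotomy {X : Set E} (hX : IsBicycle G X) :
    (∃ w ∈ VX G X, deg G X w = 4 ∧ ∀ z ∈ VX G X, z ≠ w → deg G X z = 2) ∨
    (∃ u ∈ VX G X, ∃ v ∈ VX G X, u ≠ v ∧ deg G X u = 3 ∧ deg G X v = 3 ∧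
      ∀ z ∈ VX G X, z ≠ u → z ≠ v → deg G X z = 2) := by
  have hmin := bicycle_min_deg hX
  have hcard := bicycle_card hX
  have hsum := handshake (G := G) X
  set Vf := (Set.toFinite (VX G X)).toFinset with hVf
  have hmem : ∀ w, w ∈ Vf ↔ w ∈ VX G X := fun w => Set.Finite.mem_toFinset _
  have hVc : Vf.card = (VX G X).ncard := by rw [hVf]; exact (Set.ncard_eq_toFinset_card _).symm
  have hminf : ∀ w ∈ Vf, 2 ≤ deg G X w := fun w hw => hmin w ((hmem w).1 hw)
  have hlow : ∀ (s : Finset V), (∀ w ∈ s, w ∈ Vf) → 2 * s.card ≤ ∑ w ∈ s, deg G X w := by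
    intro s hs
    have h := Finset.card_nsmul_le_sum s (fun w => deg G X w) 2
      (fun w hw => hminf w (hs w hw))
    rw [smul_eq_mul] at h
    omega
  obtain ⟨z, hzV, hz3⟩ := bicycle_deg3 hX
  have hzf : z ∈ Vf := (hmem z).2 hzV
  have hsplitz := (Finset.add_sum_erase Vf (fun w => deg G X w) hzf).symm
  have hVpos : 1 ≤ Vf.card := Finset.card_pos.2 ⟨z, hzf⟩
  by_cases h4 : 4 ≤ deg G X z
  · left
    have hall2 : ∀ w ∈ VX G X, w ≠ z → deg G X w = 2 := by
      intro w hwV hwz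
      have hwf : w ∈ Vf := (hmem w).2 hwV
      have hwe : w ∈ Vf.erase z := Finset.mem_erase.2 ⟨hwz, hwf⟩
      have hsplitw := (Finset.add_sum_erase (Vf.erase z) (fun w => deg G X w) hwe).symm
      have hlw := hlow ((Vf.erase z).erase w) (fun x hx =>
        Finset.mem_of_mem_erase (Finset.mem_of_mem_erase hx))
      rw [Finset.card_erase_of_mem hwe, Finset.card_erase_of_mem hzf] at hlw
      have h2w := hminf w hwf
      have hVpos2 : 2 ≤ Vf.card := by
        have hsub : ({z, w} : Finset V) ⊆ Vf := by
          intro x hx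
          rcases Finset.mem_insert.1 hx with rfl | hx
          · exact hzf
          · rw [Finset.mem_singleton.1 hx]
            exact hwf
        have := Finset.card_le_card hsub
        rw [Finset.card_pair (fun h => hwz h.symm)] at this
        exact this
      omega
    refine ⟨z, hzV, ?_, hall2⟩
    have hlz := hlow (Vf.erase z) (fun w hw => Finset.mem_of_mem_erase hw)
    rw [Finset.card_erase_of_mem hzf] at hlz
    omega
  · have hz3' : deg G X z = 3 := by omega
    have hlz := hlow (Vf.erase z) (fun w hw => Finset.mem_of_mem_erase hw)
    rw [Finset.card_erase_of_mem hzf] at hlz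
    have hw : ∃ w ∈ Vf.erase z, 3 ≤ deg G X w := by
      by_contra hall
      push_neg at hall
      have hup := Finset.sum_le_card_nsmul (Vf.erase z) (fun w => deg G X w) 2
        (fun w hw' => by have := hall w hw'; show deg G X w ≤ 2; omega)
      rw [smul_eq_mul, Finset.card_erase_of_mem hzf] at hup
      omega
    obtain ⟨w, hwe, hw3⟩ := hw
    right
    have hwf : w ∈ Vf := Finset.mem_of_mem_erase hwe
    have hwz : w ≠ z := (Finset.mem_erase.1 hwe).1
    have hsplitw := (Finset.add_sum_erase (Vf.erase z) (fun w => deg G X w) hwe).symm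
    have hlw := hlow ((Vf.erase z).erase w) (fun x hx =>
      Finset.mem_of_mem_erase (Finset.mem_of_mem_erase hx))
    rw [Finset.card_erase_of_mem hwe, Finset.card_erase_of_mem hzf] at hlw
    have hVpos2 : 2 ≤ Vf.card := by
      have hsub : ({z, w} : Finset V) ⊆ Vf := by
        intro x hx
        rcases Finset.mem_insert.1 hx with rfl | hx
        · exact hzf
        · rw [Finset.mem_singleton.1 hx]
          exact hwf
      have := Finset.card_le_card hsub
      rw [Finset.card_pair (fun h => hwz h.symm)] at this
      exact this
    have hw3' : deg G X w = 3 := by omega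
    refine ⟨z, hzV, w, (hmem w).1 hwf, Ne.symm hwz, hz3', hw3', ?_⟩
    intro x hxV hxz hxw
    have hxf : x ∈ Vf := (hmem x).2 hxV
    have hxe : x ∈ (Vf.erase z).erase w :=
      Finset.mem_erase.2 ⟨hxw, Finset.mem_erase.2 ⟨hxz, hxf⟩⟩
    have hsplitx := (Finset.add_sum_erase ((Vf.erase z).erase w) (fun y => deg G X y) hxe).symm
    have hlx := hlow (((Vf.erase z).erase w).erase x) (fun y hy =>
      Finset.mem_of_mem_erase (Finset.mem_of_mem_erase (Finset.mem_of_mem_erase hy)))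
    rw [Finset.card_erase_of_mem hxe, Finset.card_erase_of_mem hwe,
      Finset.card_erase_of_mem hzf] at hlx
    have h2x := hminf x hxf
    have hVpos3 : 3 ≤ Vf.card := by
      have hsub : ({z, w, x} : Finset V) ⊆ Vf := by
        intro y hy
        rcases Finset.mem_insert.1 hy with rfl | hy
        · exact hzf
        rcases Finset.mem_insert.1 hy with rfl | hy
        · exact hwf
        · rw [Finset.mem_singleton.1 hy]
          exact hxf
      have hc := Finset.card_le_card hsub
      have : ({z, w, x} : Finset V).card = 3 := by
        rw [Finset.card_insert_of_notMem (by
          simp only [Finset.mem_insert, Finset.mem_singleton]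
          rintro (h | h)
          exacts [hwz h.symm, hxz h.symm]), Finset.card_pair (fun h => hxw h.symm)]
      omega
    omega


end

section

open Set
open scoped Classical

variable {V E : Type*} {G : MGraph V E} [Fintype V] [Fintype E]

lemma case_deg4 {X : Set E} (hX : IsBicycle G X) {w : V} (hw : w ∈ VX G X)
    (h4 : deg G X w = 4) (h2 : ∀ z ∈ VX G X, z ≠ w → deg G X z = 2) :
    IsTightHandcuff G X := by
  have hconn := hX.1.1
  have hcard := bicycle_card hX
  have hVpos : 1 ≤ (VX G X).ncard := (Set.ncard_pos (Set.toFinite _)).2 ⟨w, hw⟩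
  have hne : X.Nonempty := Set.nonempty_of_ncard_ne_zero (by omega)
  obtain ⟨C, hCX, hC⟩ := exists_cycle (G := G) X.ncard X rfl hne (by omega)
  have hDdeg : ∀ z, deg G X z = deg G C z + deg G (X \ C) z := deg_add (G := G) hCX
  have hCneX : C ≠ X := by
    rintro rfl
    exact absurd (hC.2.2 w hw) (by omega)
  have hwC : w ∈ VX G C := by
    by_contra hnC
    obtain ⟨z, hz, h3⟩ := exists_deg3 hconn hC hCX hCneX
    have hzw : z = w := by
      by_contra hzw
      exact absurd (h2 z (VX_mono hCX hz) hzw) (by omega)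
    exact hnC (hzw ▸ hz)
  have hD1 : deg G (X \ C) w = 2 := by
    have ha := hC.2.2 w hwC
    have hb := hDdeg w
    omega
  have hDdeg2 : ∀ z ∈ VX G (X \ C), deg G (X \ C) z = 2 := by
    intro z hz
    by_cases hzw : z = w
    · exact hzw ▸ hD1
    by_cases hzC : z ∈ VX G C
    · exfalso
      have ha := h2 z (VX_mono hCX hzC) hzw
      have hb := hC.2.2 z hzC
      have hc := hDdeg z
      have hd := one_le_deg_iff.1 hz
      omega
    · have hzX : z ∈ VX G X := VX_mono Set.diff_subset hz
      have ha := h2 z hzX hzw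
      have hb : deg G C z = 0 := deg_eq_zero hzC
      have hc := hDdeg z
      omega
  have hDne : (X \ C).Nonempty :=
    Set.diff_nonempty.2 (fun h => hCneX (subset_antisymm hCX h))
  have hkey : ∀ x ∈ X \ C, w ∈ VX G (comp G (X \ C) x) := by
    intro x hx
    obtain ⟨b, hb⟩ := hC.1
    obtain ⟨f, hf, z, hzf, hzC, hrtg⟩ := first_entry hconn hx.1 hx.2 (hCX hb) hb
    have hzw : z = w := by
      by_contra hzw
      have hd := hDdeg z
      have h2' := h2 z (VX_mono hCX hzC) hzw
      have hC2 := hC.2.2 z hzC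
      have hpos := deg_pos_of_mem hf hzf
      omega
    exact ⟨f, ⟨hf, hrtg⟩, hzw ▸ hzf⟩
  have hDconn : ConnOn G (X \ C) := fun a ha b hb =>
    comp_merge ha hb (hkey a ha) (hkey b hb)
  have hvx : VX G C ∩ VX G (X \ C) = {w} := by
    ext z
    simp only [Set.mem_inter_iff, Set.mem_singleton_iff]
    constructor
    · rintro ⟨h1', h2'⟩
      by_contra hzw
      have ha := h2 z (VX_mono hCX h1') hzw
      have hb := hC.2.2 z h1'
      have hc := hDdeg z
      have hd := one_le_deg_iff.1 h2'
      omega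
    · rintro rfl
      exact ⟨hwC, one_le_deg_iff.2 (by omega)⟩
  refine ⟨C, X \ C, w, hC, ⟨hDne, hDconn, hDdeg2⟩, ?_, hvx, (Set.union_diff_cancel hCX).symm⟩
  apply Set.eq_empty_iff_forall_notMem.2
  rintro f ⟨hf1, -, hf2⟩
  exact hf2 hf1

lemma theta_case {X C : Set E} {u v : V} (hconn : ConnOn G X) (hCX : C ⊆ X)
    (hC : IsCycle G C) (hCneX : C ≠ X) (huv : u ≠ v)
    (h3u : deg G X u = 3) (h3v : deg G X v = 3)
    (h2 : ∀ z ∈ VX G X, z ≠ u → z ≠ v → deg G X z = 2)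
    (hub : u ∈ VX G C) (hvb : v ∈ VX G C) : IsTheta G X := by
  have hDdeg : ∀ z, deg G X z = deg G C z + deg G (X \ C) z := deg_add (G := G) hCX
  have hDu : deg G (X \ C) u = 1 := by
    have ha := hC.2.2 u hub
    have hb := hDdeg u
    omega
  have hDv : deg G (X \ C) v = 1 := by
    have ha := hC.2.2 v hvb
    have hb := hDdeg v
    omega
  have hfactA : ∀ z, z ∈ VX G C → z ∈ VX G (X \ C) → z = u ∨ z = v := by
    intro z h1' h2'
    by_contra hor
    push_neg at hor
    have ha := h2 z (VX_mono hCX h1') hor.1 hor.2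
    have hb := hC.2.2 z h1'
    have hc := hDdeg z
    have hd := one_le_deg_iff.1 h2'
    omega
  have hDle : ∀ z ∈ VX G (X \ C), deg G (X \ C) z ≤ 2 := by
    intro z hz
    by_cases hzu : z = u
    · rw [hzu, hDu]
      omega
    by_cases hzv : z = v
    · rw [hzv, hDv]
      omega
    by_cases hzC : z ∈ VX G C
    · rcases hfactA z hzC hz with rfl | rfl
      exacts [absurd rfl hzu, absurd rfl hzv]
    · have ha := h2 z (VX_mono Set.diff_subset hz) hzu hzv
      have hb : deg G C z = 0 := deg_eq_zero hzC
      have hc := hDdeg z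
      omega
  have hDodd : ∀ z ∈ VX G (X \ C), Odd (deg G (X \ C) z) → z = u ∨ z = v := by
    intro z hz ho
    by_contra hor
    push_neg at hor
    by_cases hzC : z ∈ VX G C
    · rcases hfactA z hzC hz with rfl | rfl
      exacts [absurd rfl hor.1, absurd rfl hor.2]
    · have ha := h2 z (VX_mono Set.diff_subset hz) hor.1 hor.2
      have hb : deg G C z = 0 := deg_eq_zero hzC
      have hc := hDdeg z
      obtain ⟨k, hk⟩ := ho
      omega
  have hDne : (X \ C).Nonempty :=
    Set.diff_nonempty.2 (fun h => hCneX (subset_antisymm hCX h))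
  have hkey : ∀ x ∈ X \ C, u ∈ VX G (comp G (X \ C) x) := by
    intro x hx
    obtain ⟨b, hb⟩ := hC.1
    obtain ⟨f, hf, z, hzf, hzC, hrtg⟩ := first_entry hconn hx.1 hx.2 (hCX hb) hb
    have hzD : z ∈ VX G (X \ C) := ⟨f, hf, hzf⟩
    have hzuv := hfactA z hzC hzD
    have hzcomp : z ∈ VX G (comp G (X \ C) x) := ⟨f, ⟨hf, hrtg⟩, hzf⟩
    have hodd : Odd (deg G (comp G (X \ C) x) z) := by
      rw [deg_comp hzcomp]
      rcases hzuv with rfl | rfl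
      · rw [hDu]
        exact odd_one
      · rw [hDv]
        exact odd_one
    have hsub : ∀ y ∈ VX G (comp G (X \ C) x),
        Odd (deg G (comp G (X \ C) x) y) → y = u ∨ y = v := by
      intro y hy ho
      rw [deg_comp hy] at ho
      exact hDodd y (VX_mono comp_subset hy) ho
    exact (odd_vertex_pair huv hsub hzcomp hodd).1.1
  have hDconn : ConnOn G (X \ C) := fun a ha b hb =>
    comp_merge ha hb (hkey a ha) (hkey b hb)
  have hDpath : IsPathBtw G (X \ C) u v := path_of_degrees hDne hDconn hDle hDu hDv huv
  obtain ⟨P₁, P₂, hPu, hPi, hP₁, hP₂, hPvx⟩ := cycle_split hC hub hvb huv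
  have hP₁C : P₁ ⊆ C := hPu ▸ Set.subset_union_left
  have hP₂C : P₂ ⊆ C := hPu ▸ Set.subset_union_right
  have hdisjCD : ∀ (A : Set E), A ⊆ C → A ∩ (X \ C) = ∅ := by
    intro A hA
    apply Set.eq_empty_iff_forall_notMem.2
    rintro f ⟨hf1, -, hf2⟩
    exact hf2 (hA hf1)
  have hvxCD : ∀ (A : Set E), A ⊆ C → u ∈ VX G A → v ∈ VX G A →
      VX G A ∩ VX G (X \ C) = {u, v} := by
    intro A hA hAu hAv
    ext z
    simp only [Set.mem_inter_iff, Set.mem_insert_iff, Set.mem_singleton_iff]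
    constructor
    · rintro ⟨h1', h2'⟩
      exact hfactA z (VX_mono hA h1') h2'
    · rintro (rfl | rfl)
      · exact ⟨hAu, one_le_deg_iff.2 (by rw [hDu])⟩
      · exact ⟨hAv, one_le_deg_iff.2 (by rw [hDv])⟩
  refine ⟨u, v, P₁, P₂, X \ C, huv, hP₁, hP₂, hDpath, hPi, ?_, ?_, hPvx, ?_, ?_, ?_⟩
  · exact hdisjCD P₁ hP₁C
  · exact hdisjCD P₂ hP₂C
  · exact hvxCD P₁ hP₁C (path_endpoints hP₁).1 (path_endpoints hP₁).2
  · exact hvxCD P₂ hP₂C (path_endpoints hP₂).1 (path_endpoints hP₂).2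
  · have : P₁ ∪ P₂ ∪ (X \ C) = C ∪ (X \ C) := by rw [hPu]
    rw [this]
    exact (Set.union_diff_cancel hCX).symm

lemma loose_case {X C : Set E} {u v : V} (hconn : ConnOn G X) (hCX : C ⊆ X)
    (hC : IsCycle G C) (hCneX : C ≠ X)
    (hcard : X.ncard = (VX G X).ncard + 1) (huv : u ≠ v)
    (h3u : deg G X u = 3) (h3v : deg G X v = 3)
    (h2 : ∀ z ∈ VX G X, z ≠ u → z ≠ v → deg G X z = 2)
    (hub : u ∈ VX G C) (hvb : v ∉ VX G C) : IsLooseHandcuff G X := by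
  have hDdeg : ∀ z, deg G X z = deg G C z + deg G (X \ C) z := deg_add (G := G) hCX
  have hDu : deg G (X \ C) u = 1 := by
    have ha := hC.2.2 u hub
    have hb := hDdeg u
    omega
  have hDv : deg G (X \ C) v = 3 := by
    have ha : deg G C v = 0 := deg_eq_zero hvb
    have hb := hDdeg v
    omega
  have hfactA : ∀ z, z ∈ VX G C → z ∈ VX G (X \ C) → z = u := by
    intro z h1' h2'
    by_contra hzu
    have hzv : z ≠ v := fun h => hvb (h ▸ h1')
    have ha := h2 z (VX_mono hCX h1') hzu hzv
    have hb := hC.2.2 z h1'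
    have hc := hDdeg z
    have hd := one_le_deg_iff.1 h2'
    omega
  have hDvals : ∀ z ∈ VX G (X \ C), z ≠ u → z ≠ v → deg G (X \ C) z = 2 := by
    intro z hz hzu hzv
    by_cases hzC : z ∈ VX G C
    · exact absurd (hfactA z hzC hz) hzu
    · have ha := h2 z (VX_mono Set.diff_subset hz) hzu hzv
      have hb : deg G C z = 0 := deg_eq_zero hzC
      have hc := hDdeg z
      omega
  have hDne : (X \ C).Nonempty :=
    Set.diff_nonempty.2 (fun h => hCneX (subset_antisymm hCX h))
  have hkey : ∀ x ∈ X \ C, u ∈ VX G (comp G (X \ C) x) := by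
    intro x hx
    obtain ⟨b, hb⟩ := hC.1
    obtain ⟨f, hf, z, hzf, hzC, hrtg⟩ := first_entry hconn hx.1 hx.2 (hCX hb) hb
    have hzu : z = u := hfactA z hzC ⟨f, hf, hzf⟩
    exact ⟨f, ⟨hf, hrtg⟩, hzu ▸ hzf⟩
  have hDconn : ConnOn G (X \ C) := fun a ha b hb =>
    comp_merge ha hb (hkey a ha) (hkey b hb)
  have hvD : v ∈ VX G (X \ C) := one_le_deg_iff.2 (by rw [hDv]; omega)
  have huD : u ∈ VX G (X \ C) := one_le_deg_iff.2 (by rw [hDu])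
  have hvxCD : VX G C ∩ VX G (X \ C) = {u} := by
    ext z
    simp only [Set.mem_inter_iff, Set.mem_singleton_iff]
    constructor
    · rintro ⟨h1', h2'⟩
      exact hfactA z h1' h2'
    · rintro rfl
      exact ⟨hub, huD⟩
  have hvxunion : VX G X = VX G C ∪ VX G (X \ C) := by
    ext z
    constructor
    · rintro ⟨f, hf, hzf⟩
      by_cases hfC : f ∈ C
      · exact Or.inl ⟨f, hfC, hzf⟩
      · exact Or.inr ⟨f, ⟨hf, hfC⟩, hzf⟩
    · rintro (h | h)
      exacts [VX_mono hCX h, VX_mono Set.diff_subset h]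
  have hCcard : (VX G C).ncard = C.ncard := cycle_vx_card hC
  have hXsplit : C.ncard + (X \ C).ncard = X.ncard := by
    have h1 := Set.ncard_diff hCX (Set.toFinite _)
    have h2' := Set.ncard_le_ncard hCX (Set.toFinite _)
    omega
  have hDvx : (VX G (X \ C)).ncard = (X \ C).ncard := by
    have h1 := Set.ncard_union_add_ncard_inter (VX G C) (VX G (X \ C))
      (Set.toFinite _) (Set.toFinite _)
    rw [← hvxunion, hvxCD, Set.ncard_singleton] at h1
    -- also need lower bound |VX D| ≤ |D| not required; derive equality by omega
    omega
  obtain ⟨C₂, hC₂D, hC₂⟩ := exists_cycle (G := G) (X \ C).ncard _ rfl hDne (by omega)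
  have hD2deg : ∀ z, deg G (X \ C) z = deg G C₂ z + deg G ((X \ C) \ C₂) z :=
    deg_add (G := G) hC₂D
  have huC₂ : u ∉ VX G C₂ := fun h => by
    have ha := hC₂.2.2 u h
    have hb := deg_mono (G := G) hC₂D u
    omega
  have hvC₂ : v ∈ VX G C₂ := by
    by_contra hnv
    have hC₂neD : C₂ ≠ X \ C := fun h => hnv (h ▸ hvD)
    obtain ⟨z, hz, h3'⟩ := exists_deg3 hDconn hC₂ hC₂D hC₂neD
    have hzD : z ∈ VX G (X \ C) := VX_mono hC₂D hz
    have hzv : z = v := by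
      by_contra hzv
      by_cases hzu : z = u
      · rw [hzu, hDu] at h3'
        omega
      · have := hDvals z hzD hzu hzv
        omega
    exact hnv (hzv ▸ hz)
  have hPu : deg G ((X \ C) \ C₂) u = 1 := by
    have h0 : deg G C₂ u = 0 := deg_eq_zero huC₂
    have h1 := hD2deg u
    omega
  have hPv : deg G ((X \ C) \ C₂) v = 1 := by
    have h0 := hC₂.2.2 v hvC₂
    have h1 := hD2deg v
    omega
  have hPle : ∀ z ∈ VX G ((X \ C) \ C₂), deg G ((X \ C) \ C₂) z ≤ 2 := by
    intro z hz
    have hzD : z ∈ VX G (X \ C) := VX_mono Set.diff_subset hz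
    by_cases hzu : z = u
    · rw [hzu, hPu]
      omega
    by_cases hzv : z = v
    · rw [hzv, hPv]
      omega
    have h1 := hDvals z hzD hzu hzv
    have h2' := hD2deg z
    omega
  have hPne : ((X \ C) \ C₂).Nonempty := by
    obtain ⟨f, hf, -⟩ := (one_le_deg_iff.2 (by rw [hPu]) : u ∈ VX G ((X \ C) \ C₂))
    exact ⟨f, hf⟩
  have hPkey : ∀ x ∈ (X \ C) \ C₂, v ∈ VX G (comp G ((X \ C) \ C₂) x) := by
    intro x hx
    obtain ⟨b, hb⟩ := hC₂.1
    obtain ⟨f, hf, z, hzf, hzC₂, hrtg⟩ := first_entry hDconn hx.1 hx.2 (hC₂D hb) hb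
    have hzv : z = v := by
      by_contra hzv
      by_cases hzu : z = u
      · exact huC₂ (hzu ▸ hzC₂)
      · have hzD : z ∈ VX G (X \ C) := VX_mono hC₂D hzC₂
        have h2' := hC₂.2.2 z hzC₂
        have hpos := deg_pos_of_mem hf hzf
        have hd := hD2deg z
        have := hDvals z hzD hzu hzv
        omega
    exact ⟨f, ⟨hf, hrtg⟩, hzv ▸ hzf⟩
  have hPconn : ConnOn G ((X \ C) \ C₂) := fun a ha b hb =>
    comp_merge ha hb (hPkey a ha) (hPkey b hb)
  have hPpath : IsPathBtw G ((X \ C) \ C₂) u v :=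
    path_of_degrees hPne hPconn hPle hPu hPv huv
  have hdisjCC₂ : VX G C ∩ VX G C₂ = ∅ := by
    apply Set.eq_empty_iff_forall_notMem.2
    rintro z ⟨h1', h2'⟩
    have hzu : z = u := hfactA z h1' (VX_mono hC₂D h2')
    exact huC₂ (hzu ▸ h2')
  have hvxPC : VX G ((X \ C) \ C₂) ∩ VX G C = {u} := by
    ext z
    simp only [Set.mem_inter_iff, Set.mem_singleton_iff]
    constructor
    · rintro ⟨hp, hc⟩
      exact hfactA z hc (VX_mono Set.diff_subset hp)
    · rintro rfl
      exact ⟨one_le_deg_iff.2 (by rw [hPu]), hub⟩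
  have hvxPC₂ : VX G ((X \ C) \ C₂) ∩ VX G C₂ = {v} := by
    ext z
    simp only [Set.mem_inter_iff, Set.mem_singleton_iff]
    constructor
    · rintro ⟨hp, hc2⟩
      by_contra hzv
      by_cases hzu : z = u
      · exact huC₂ (hzu ▸ hc2)
      · have hzD : z ∈ VX G (X \ C) := VX_mono hC₂D hc2
        have h0 := hC₂.2.2 z hc2
        have h1 := one_le_deg_iff.1 hp
        have hd := hD2deg z
        have := hDvals z hzD hzu hzv
        omega
    · rintro rfl
      exact ⟨one_le_deg_iff.2 (by rw [hPv]), hvC₂⟩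
  have hPC : ((X \ C) \ C₂) ∩ C = ∅ := by
    apply Set.eq_empty_iff_forall_notMem.2
    rintro f ⟨⟨⟨-, hn⟩, -⟩, hc⟩
    exact hn hc
  have hPC₂ : ((X \ C) \ C₂) ∩ C₂ = ∅ := by
    apply Set.eq_empty_iff_forall_notMem.2
    rintro f ⟨⟨-, hn⟩, hc⟩
    exact hn hc
  have hunion : X = C ∪ C₂ ∪ ((X \ C) \ C₂) := by
    have h1 : C₂ ∪ ((X \ C) \ C₂) = X \ C := Set.union_diff_cancel hC₂D
    rw [Set.union_assoc, h1]
    exact (Set.union_diff_cancel hCX).symm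
  exact ⟨C, C₂, (X \ C) \ C₂, u, v, hC, hC₂, hdisjCC₂, hPpath, hvxPC, hvxPC₂,
    hPC, hPC₂, hunion⟩

lemma case_deg33 {X : Set E} (hX : IsBicycle G X) {u v : V} (hu : u ∈ VX G X)
    (hv : v ∈ VX G X) (huv : u ≠ v) (h3u : deg G X u = 3) (h3v : deg G X v = 3)
    (h2 : ∀ z ∈ VX G X, z ≠ u → z ≠ v → deg G X z = 2) :
    IsTheta G X ∨ IsLooseHandcuff G X := by
  have hconn := hX.1.1
  have hcard := bicycle_card hX
  have hVpos : 1 ≤ (VX G X).ncard := (Set.ncard_pos (Set.toFinite _)).2 ⟨u, hu⟩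
  have hne : X.Nonempty := Set.nonempty_of_ncard_ne_zero (by omega)
  obtain ⟨C, hCX, hC⟩ := exists_cycle (G := G) X.ncard X rfl hne (by omega)
  have hCneX : C ≠ X := by
    rintro rfl
    exact absurd (hC.2.2 u hu) (by omega)
  by_cases hub : u ∈ VX G C
  · by_cases hvb : v ∈ VX G C
    · exact Or.inl (theta_case hconn hCX hC hCneX huv h3u h3v h2 hub hvb)
    · exact Or.inr (loose_case hconn hCX hC hCneX hcard huv h3u h3v h2 hub hvb)
  · by_cases hvb : v ∈ VX G C
    · exact Or.inr (loose_case hconn hCX hC hCneX hcard (Ne.symm huv) h3v h3u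
        (fun z hz hzv hzu => h2 z hz hzu hzv) hvb hub)
    · exfalso
      have hDne : (X \ C).Nonempty :=
        Set.diff_nonempty.2 (fun h => hCneX (subset_antisymm hCX h))
      obtain ⟨x, hx⟩ := hDne
      obtain ⟨b, hb⟩ := hC.1
      obtain ⟨f, hf, z, hzf, hzC, -⟩ := first_entry hconn hx.1 hx.2 (hCX hb) hb
      by_cases hzu : z = u
      · exact hub (hzu ▸ hzC)
      by_cases hzv : z = v
      · exact hvb (hzv ▸ hzC)
      · have ha := h2 z (VX_mono hCX hzC) hzu hzv
        have hb2 := hC.2.2 z hzC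
        have hc := deg_add (G := G) hCX z
        have hd := deg_pos_of_mem hf hzf
        omega

theorem bicycle_main {X : Set E} (hX : IsBicycle G X) :
    IsTheta G X ∨ IsLooseHandcuff G X ∨ IsTightHandcuff G X := by
  rcases bicycle_dichotomy hX with ⟨w, hw, h4, h2⟩ | ⟨u, hu, v, hv, huv, h3u, h3v, h2⟩
  · exact Or.inr (Or.inr (case_deg4 hX hw h4 h2))
  · rcases case_deg33 hX hu hv huv h3u h3v h2 with h | h
    · exact Or.inl h
    · exact Or.inr (Or.inl h)


end

end Bicirc

open Bicirc in
theorem stmt0 {V E : Type*} [Fintype V] [Fintype E] (G : MGraph V E) (X : Set E)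
    (hX : IsBicycle G X) :
    IsTheta G X ∨ IsLooseHandcuff G X ∨ IsTightHandcuff G X := by
  exact Bicirc.bicycle_main hX
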